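/- arXiv:2412.05639 — 9 statements merged into one kernel-verified Lean document; each statement's English description precedes it below -/
import Mathlib

section
/- Let φ ∈ C(X) and let F be a nonempty subset of M_T(X). Then the following are equivalent: (i) for every β ≥ 1, F is exactly the set of all equilibrium states for βφ; (ii) F is exactly the set of all equilibrium states for φ, and every μ ∈ F satisfies ∫ φ dμ = sup { ∫ φ dν : ν ∈ M_T(X) }. -/
open MeasureTheory Filter Set
open scoped NNReal ENNReal

variable {X : Type*} [MetricSpace X] [CompactSpace X] [Nonempty X]
  [MeasurableSpace X] [BorelSpace X]

/-- The set `M_T(X)` of `T`-invariant Borel probability measures on `X`,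
equipped (as a subset of `ProbabilityMeasure X`) with the weak-* topology. -/
def InvMeas (T : X → X) : Set (ProbabilityMeasure X) :=
  {μ | (μ : Measure X).map T = (μ : Measure X)}

/-- The pressure `P(φ) = sup { h(μ) + ∫ φ dμ : μ ∈ M_T(X) }`. -/
noncomputable def press (T : X → X) (h : ProbabilityMeasure X → ℝ) (φ : C(X, ℝ)) : ℝ :=
  sSup ((fun μ : ProbabilityMeasure X => h μ + ∫ x, φ x ∂(μ : Measure X)) '' InvMeas T)

/-- `μ` is an equilibrium state for `φ`: `μ ∈ M_T(X)` and `h(μ) + ∫ φ dμ = P(φ)`. -/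
def IsEquilib (T : X → X) (h : ProbabilityMeasure X → ℝ) (φ : C(X, ℝ))
    (μ : ProbabilityMeasure X) : Prop :=
  μ ∈ InvMeas T ∧ h μ + ∫ x, φ x ∂(μ : Measure X) = press T h φ

/-- `Max(φ) = sup { ∫ φ dν : ν ∈ M_T(X) }`. -/
noncomputable def MaxInt (T : X → X) (φ : C(X, ℝ)) : ℝ :=
  sSup ((fun μ : ProbabilityMeasure X => ∫ x, φ x ∂(μ : Measure X)) '' InvMeas T)

/-- `h_∞(φ) = sup { h(μ) : μ ∈ M_T(X), ∫ φ dμ = Max(φ) }`. -/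
noncomputable def hInfty (T : X → X) (h : ProbabilityMeasure X → ℝ) (φ : C(X, ℝ)) : ℝ :=
  sSup (h '' {μ ∈ InvMeas T | ∫ x, φ x ∂(μ : Measure X) = MaxInt T φ})

lemma integrable_cm {X : Type*} [MetricSpace X] [CompactSpace X]
    [MeasurableSpace X] [BorelSpace X]
    (φ : C(X, ℝ)) (μ : ProbabilityMeasure X) :
    MeasureTheory.Integrable (fun x => φ x) (μ : MeasureTheory.Measure X) := by
  have := φ.continuous.continuousOn.integrableOn_compact (μ := (μ : Measure X)) isCompact_univ
  rwa [integrableOn_univ] at this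

lemma abs_int_le {X : Type*} [MetricSpace X] [CompactSpace X]
    [MeasurableSpace X] [BorelSpace X]
    (φ : C(X, ℝ)) (μ : ProbabilityMeasure X) :
    |∫ x, φ x ∂(μ : MeasureTheory.Measure X)| ≤ ‖φ‖ := by
  have := norm_integral_le_of_norm_le_const (μ := (μ : Measure X)) (f := fun x => φ x)
    (C := ‖φ‖) (Filter.Eventually.of_forall fun x => φ.norm_coe_le_norm x)
  simpa using this

theorem stmt0
    (T : X → X) (hT : Continuous T) (hne : (InvMeas T).Nonempty)
    (h : ProbabilityMeasure X → ℝ)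
    (hbd : ∃ C : ℝ, ∀ μ ∈ InvMeas T, |h μ| ≤ C)
    (haff : ∀ μ ν : ProbabilityMeasure X, μ ∈ InvMeas T → ν ∈ InvMeas T →
      ∀ t : ℝ, 0 ≤ t → t ≤ 1 → ∀ σ : ProbabilityMeasure X,
        (σ : Measure X) =
          ENNReal.ofReal t • (μ : Measure X) + ENNReal.ofReal (1 - t) • (ν : Measure X) →
        h σ = t * h μ + (1 - t) * h ν)
    (φ : C(X, ℝ)) (F : Set (ProbabilityMeasure X)) (hFne : F.Nonempty)
    (hFM : F ⊆ InvMeas T) :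
    (∀ β : ℝ, 1 ≤ β → F = {μ | IsEquilib T h (β • φ) μ}) ↔
      (F = {μ | IsEquilib T h φ μ} ∧
        ∀ μ ∈ F, ∫ x, φ x ∂(μ : Measure X) = MaxInt T φ) := by
  obtain ⟨C, hC⟩ := hbd
  -- integral of β • φ
  have hsmul : ∀ (β : ℝ) (μ : ProbabilityMeasure X),
      ∫ x, (β • φ) x ∂(μ : Measure X) = β * ∫ x, φ x ∂(μ : Measure X) := by
    intro β μ
    simp only [ContinuousMap.smul_apply, smul_eq_mul]
    exact integral_const_mul β _
  -- MaxInt bounds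
  have hMaxBdd : BddAbove ((fun μ : ProbabilityMeasure X =>
      ∫ x, φ x ∂(μ : Measure X)) '' InvMeas T) := by
    refine ⟨‖φ‖, ?_⟩
    rintro r ⟨ν, _, rfl⟩
    exact (abs_le.mp (abs_int_le φ ν)).2
  have hMax_le : ∀ ν ∈ InvMeas T, ∫ x, φ x ∂(ν : Measure X) ≤ MaxInt T φ := fun ν hν =>
    le_csSup hMaxBdd (Set.mem_image_of_mem _ hν)
  -- pressure bounds
  have hPressBdd : ∀ ψ : C(X, ℝ), BddAbove ((fun μ : ProbabilityMeasure X =>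
      h μ + ∫ x, ψ x ∂(μ : Measure X)) '' InvMeas T) := by
    intro ψ
    refine ⟨C + ‖ψ‖, ?_⟩
    rintro r ⟨ν, hν, rfl⟩
    dsimp only
    have h1 := (abs_le.mp (hC ν hν)).2
    have h2 := (abs_le.mp (abs_int_le ψ ν)).2
    linarith
  have hPress_ge : ∀ (ψ : C(X, ℝ)) (ν : ProbabilityMeasure X), ν ∈ InvMeas T →
      h ν + ∫ x, ψ x ∂(ν : Measure X) ≤ press T h ψ := fun ψ ν hν =>
    le_csSup (hPressBdd ψ) (Set.mem_image_of_mem _ hν)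
  have hPress_le : ∀ (ψ : C(X, ℝ)) (r : ℝ),
      (∀ ν ∈ InvMeas T, h ν + ∫ x, ψ x ∂(ν : Measure X) ≤ r) → press T h ψ ≤ r := by
    intro ψ r hr
    refine csSup_le (hne.image _) ?_
    rintro s ⟨ν, hν, rfl⟩
    exact hr ν hν
  constructor
  · -- (i) → (ii)
    intro H
    have h1 : F = {μ | IsEquilib T h φ μ} := by
      have := H 1 le_rfl
      rwa [one_smul] at this
    refine ⟨h1, ?_⟩
    intro μ hμF
    have hμM : μ ∈ InvMeas T := hFM hμF
    have hub : ∀ ν ∈ InvMeas T, ∫ x, φ x ∂(ν : Measure X) ≤ ∫ x, φ x ∂(μ : Measure X) := by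
      intro ν hν
      by_contra hlt
      push_neg at hlt
      set Iμ := ∫ x, φ x ∂(μ : Measure X)
      set Iν := ∫ x, φ x ∂(ν : Measure X)
      have hε : 0 < Iν - Iμ := by linarith
      set β : ℝ := max 1 ((2 * C + 1) / (Iν - Iμ)) with hβdef
      have hβ1 : 1 ≤ β := le_max_left _ _
      have hβ2 : (2 * C + 1) / (Iν - Iμ) ≤ β := le_max_right _ _
      have hβ3 : 2 * C + 1 ≤ β * (Iν - Iμ) := by
        rw [div_le_iff₀ hε] at hβ2
        linarith
      have hμeq : IsEquilib T h (β • φ) μ := by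
        have := H β hβ1
        rw [this] at hμF
        exact hμF
      have hle := hPress_ge (β • φ) ν hν
      rw [← hμeq.2, hsmul, hsmul] at hle
      have hCμ := (abs_le.mp (hC μ hμM)).2
      have hCν := (abs_le.mp (hC ν hν)).1
      nlinarith
    refine le_antisymm (hMax_le μ hμM) ?_
    refine csSup_le (hne.image _) ?_
    rintro r ⟨ν, hν, rfl⟩
    exact hub ν hν
  · -- (ii) → (i)
    rintro ⟨hF, hMax⟩ β hβ
    obtain ⟨μ₀, hμ₀F⟩ := hFne
    have hμ₀ : IsEquilib T h φ μ₀ := by rw [hF] at hμ₀F; exact hμ₀F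
    have hμ₀max : ∫ x, φ x ∂(μ₀ : Measure X) = MaxInt T φ := hMax μ₀ hμ₀F
    have hμ₀M : μ₀ ∈ InvMeas T := hμ₀.1
    have hPβ : press T h (β • φ) = press T h φ + (β - 1) * MaxInt T φ := by
      refine le_antisymm ?_ ?_
      · refine hPress_le _ _ ?_
        intro ν hν
        rw [hsmul]
        have h1 := hPress_ge φ ν hν
        have h2 := hMax_le ν hν
        nlinarith
      · have := hPress_ge (β • φ) μ₀ hμ₀M
        rw [hsmul] at this
        calc press T h φ + (β - 1) * MaxInt T φ
            = h μ₀ + β * ∫ x, φ x ∂(μ₀ : Measure X) := by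
              rw [← hμ₀.2, hμ₀max]; ring
          _ ≤ press T h (β • φ) := this
    ext ν
    constructor
    · intro hνF
      have hνM : ν ∈ InvMeas T := hFM hνF
      have hνeq : IsEquilib T h φ ν := by rw [hF] at hνF; exact hνF
      refine ⟨hνM, ?_⟩
      rw [hsmul, hPβ, ← hνeq.2, hMax ν hνF]
      ring
    · intro hνeq
      obtain ⟨hνM, hνe⟩ := hνeq
      rw [hsmul, hPβ] at hνe
      have ha : h ν + ∫ x, φ x ∂(ν : Measure X) ≤ press T h φ := hPress_ge φ ν hνM
      have hb : ∫ x, φ x ∂(ν : Measure X) ≤ MaxInt T φ := hMax_le ν hνM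
      have hfin : h ν + ∫ x, φ x ∂(ν : Measure X) = press T h φ := by nlinarith
      rw [hF]
      exact ⟨hνM, hfin⟩
end

section
/- Let μ ∈ M_T(X) be ergodic. Then there exists φ ∈ C(X) such that μ is the unique equilibrium state for φ, if and only if there exists ψ ∈ C(X) such that for every β ≥ 1, μ is the unique equilibrium state for βψ (i.e., μ is the freezing state of some potential). -/
open MeasureTheory Filter Set
open scoped NNReal ENNReal Topology

set_option linter.unusedSectionVars false
set_option linter.unusedVariables false
set_option maxHeartbeats 1000000

variable {X : Type*} [MetricSpace X] [CompactSpace X] [Nonempty X]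
  [MeasurableSpace X] [BorelSpace X]

lemma cmInt (ν : ProbabilityMeasure X) (f : C(X, ℝ)) :
    Integrable f (ν : Measure X) := by
  refine Integrable.mono' (integrable_const ‖f‖) f.continuous.aestronglyMeasurable ?_
  exact Eventually.of_forall fun x => f.norm_coe_le_norm x

lemma cmMem2 (ν : ProbabilityMeasure X) (f : X → ℝ) (hf : Continuous f) :
    MemLp f 2 (ν : Measure X) := by
  obtain ⟨C, hC⟩ := (isCompact_range hf).isBounded.exists_norm_le
  exact MemLp.of_bound hf.aestronglyMeasurable C
    (Eventually.of_forall fun x => hC _ (mem_range_self x))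

lemma invInt {T : X → X} (hT : Continuous T) {ν : ProbabilityMeasure X}
    (hν : ν ∈ InvMeas T) (f : X → ℝ) (hf : Continuous f) :
    ∫ x, f (T x) ∂(ν : Measure X) = ∫ x, f x ∂(ν : Measure X) := by
  conv_rhs => rw [← hν]
  rw [integral_map hT.aemeasurable hf.aestronglyMeasurable]

lemma invIntIter {T : X → X} (hT : Continuous T) {ν : ProbabilityMeasure X}
    (hν : ν ∈ InvMeas T) (f : X → ℝ) (hf : Continuous f) (n : ℕ) :
    ∫ x, f (T^[n] x) ∂(ν : Measure X) = ∫ x, f x ∂(ν : Measure X) := by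
  induction n with
  | zero => simp
  | succ n ih =>
      rw [← ih]
      have : ∀ x, f (T^[n+1] x) = (fun y => f (T^[n] y)) (T x) := by
        intro x; rw [Function.iterate_succ_apply]
      simp_rw [this]
      exact invInt hT hν _ (hf.comp (hT.iterate n))

lemma lpSumCoe {m : Measure X} {ι : Type} (t : Finset ι) (f : ι → Lp ℝ 2 m) :
    ⇑(∑ i ∈ t, f i) =ᵐ[m] fun x => ∑ i ∈ t, f i x := by
  classical
  induction t using Finset.induction with
  | empty => simp only [Finset.sum_empty]; exact Lp.coeFn_zero ℝ 2 m
  | insert a s hni ih =>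
      rw [Finset.sum_insert hni]
      filter_upwards [Lp.coeFn_add (f a) (∑ i ∈ s, f i), ih] with x hx hx2
      rw [hx]
      simp only [Pi.add_apply, hx2, Finset.sum_insert hni]

lemma met (T : X → X) (hT : Continuous T) (μ : ProbabilityMeasure X)
    (hμ : μ ∈ InvMeas T) (herg : Ergodic T (μ : Measure X)) (u : C(X, ℝ))
    {ε : ℝ} (hε : 0 < ε) :
    ∃ v : C(X, ℝ),
      (∀ ν ∈ InvMeas T, ∫ x, v x ∂(ν : Measure X) = ∫ x, u x ∂(ν : Measure X)) ∧
      ((∀ x, 0 ≤ u x) → ∀ x, 0 ≤ v x) ∧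
      ∫ x, |v x - ∫ y, u y ∂(μ : Measure X)| ∂(μ : Measure X) ≤ ε := by
  classical
  set m : Measure X := (μ : Measure X) with hm
  set c : ℝ := ∫ y, u y ∂m with hc
  have pres : MeasurePreserving T m m := herg.toMeasurePreserving
  -- continuous maps u ∘ T^[n]
  set cm : ℕ → C(X, ℝ) := fun n => u.comp ⟨T^[n], hT.iterate n⟩ with hcm
  set e : ℕ → Lp ℝ 2 m := fun n => (cmMem2 μ _ (cm n).continuous).toLp (cm n) with he
  have hecoe : ∀ n, ⇑(e n) =ᵐ[m] ⇑(cm n) := fun n => MemLp.coeFn_toLp _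
  set K : Lp ℝ 2 m →ₗᵢ[ℝ] Lp ℝ 2 m := Lp.compMeasurePreservingₗᵢ ℝ T pres with hK
  have hKapp : ∀ w : Lp ℝ 2 m, ⇑(K w) =ᵐ[m] (⇑w) ∘ T := fun w =>
    Lp.coeFn_compMeasurePreserving w pres
  have hKe : ∀ n, K (e n) = e (n + 1) := by
    intro n
    apply Lp.ext
    refine (hKapp (e n)).trans ?_
    refine (((hecoe n).comp_tendsto ?_).trans ?_).trans (hecoe (n+1)).symm
    · exact pres.quasiMeasurePreserving.tendsto_ae
    · apply Eventually.of_forall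
      intro x
      simp [hcm, Function.iterate_succ_apply]
  -- the closed convex hull of the orbit of `u` in `L²(μ)`
  set S : Set (Lp ℝ 2 m) := convexHull ℝ (Set.range e) with hS
  have hSne : (closure S).Nonempty :=
    ⟨e 0, subset_closure (subset_convexHull ℝ _ (mem_range_self 0))⟩
  have hconv : Convex ℝ (closure S) := (convex_convexHull ℝ _).closure
  have hcompl : IsComplete (closure S) := isClosed_closure.isComplete
  obtain ⟨v, hvC, hvmin⟩ :=
    exists_norm_eq_iInf_of_complete_convex hSne hcompl hconv 0
  have hmin : ∀ w ∈ closure S, ‖v‖ ≤ ‖w‖ := by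
    intro w hw
    have h1 : (⨅ w : closure S, ‖(0 : Lp ℝ 2 m) - w‖) ≤ ‖(0 : Lp ℝ 2 m) - w‖ := by
      exact ciInf_le ⟨0, by rintro _ ⟨z, rfl⟩; positivity⟩ (⟨w, hw⟩ : closure S)
    have h2 := hvmin ▸ h1
    simpa [norm_sub_rev, zero_sub, norm_neg] using h2
  -- K maps the hull into itself
  have hKS : ∀ w ∈ closure S, K w ∈ closure S := by
    intro w hw
    have h1 : K w ∈ ⇑K '' closure S := mem_image_of_mem _ hw
    have h2 : ⇑K '' closure S ⊆ closure (⇑K '' S) :=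
      image_closure_subset_closure_image (s := S) K.continuous
    refine closure_mono ?_ (h2 h1)
    have h3 : ⇑K '' S = convexHull ℝ (⇑K '' Set.range e) := by
      rw [hS]
      exact (K.toLinearMap.image_convexHull _)
    rw [h3]
    apply convexHull_mono
    rintro _ ⟨_, ⟨n, rfl⟩, rfl⟩
    exact ⟨n + 1, (hKe n).symm⟩
  -- the minimal element is `K`-fixed
  have hfix : K v = v := by
    have h1 : ‖K v‖ = ‖v‖ := K.norm_map v
    have hmid : ((1:ℝ)/2) • v + ((1:ℝ)/2) • K v ∈ closure S :=
      hconv hvC (hKS v hvC) (by norm_num) (by norm_num) (by norm_num)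
    have h2 : ‖v‖ ≤ ‖((1:ℝ)/2) • v + ((1:ℝ)/2) • K v‖ := hmin _ hmid
    have h3 : ((1:ℝ)/2) • v + ((1:ℝ)/2) • K v = ((1:ℝ)/2) • (v + K v) := by
      rw [smul_add]
    have h4 : ‖((1:ℝ)/2) • (v + K v)‖ = (1/2) * ‖v + K v‖ := by
      rw [norm_smul]; norm_num
    have par := parallelogram_law_with_norm ℝ v (K v)
    have h5 : ‖v - K v‖ * ‖v - K v‖ ≤ 0 := by
      rw [h3, h4] at h2
      nlinarith [norm_nonneg (v + K v), norm_nonneg v]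
    have h6 : ‖v - K v‖ = 0 := by nlinarith [norm_nonneg (v - K v)]
    have := norm_sub_eq_zero_iff.mp h6
    exact this.symm
  -- hence a.e. constant by ergodicity
  have hvT : (⇑v) ∘ T =ᵐ[m] ⇑v := by
    have h1 : ⇑(K v) =ᵐ[m] (⇑v) ∘ T := hKapp v
    rw [hfix] at h1
    exact h1.symm
  obtain ⟨c', hc'⟩ := herg.ae_eq_const_of_ae_eq_comp₀
    (Lp.aestronglyMeasurable v).aemeasurable.nullMeasurable hvT
  -- extract a finite convex combination close to `v`
  obtain ⟨g, hgS, hdist⟩ := Metric.mem_closure_iff.mp hvC (ε/2) (by linarith)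
  rw [hS] at hgS
  rw [convexHull_eq] at hgS
  obtain ⟨ι, t, w, z, hw0, hw1, hz, hgcm⟩ := hgS
  simp only [Set.mem_range] at hz
  choose! n hn using hz
  have hgsum : g = ∑ i ∈ t, w i • e (n i) := by
    rw [← hgcm, Finset.centerMass_eq_of_sum_1 _ _ hw1]
    exact Finset.sum_congr rfl fun i hi => by rw [hn i hi]
  set vc : C(X, ℝ) := ∑ i ∈ t, w i • cm (n i) with hvc
  have hvcapp : ∀ x, vc x = ∑ i ∈ t, w i * (cm (n i)) x := by
    intro x
    rw [hvc]
    simp only [ContinuousMap.coe_sum, Finset.sum_apply, ContinuousMap.coe_smul,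
      Pi.smul_apply, smul_eq_mul]
  have hgcoe : ⇑g =ᵐ[m] ⇑vc := by
    rw [hgsum]
    refine (lpSumCoe t _).trans ?_
    have H : ∀ᵐ x ∂m, ∀ i ∈ t, (w i • e (n i)) x = w i * (cm (n i)) x := by
      rw [eventually_all_finset]
      intro i hi
      filter_upwards [Lp.coeFn_smul (w i) (e (n i)), hecoe (n i)] with x hx hx2
      rw [hx]
      simp [hx2]
    filter_upwards [H] with x hx
    rw [hvcapp]
    exact Finset.sum_congr rfl hx
  have hint2 : ∀ q : Lp ℝ 2 m, Integrable ⇑q m := fun q =>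
    ((Lp.memLp q).mono_exponent one_le_two).integrable le_rfl
  have hL1L2 : ∫ x, ‖(g - v) x‖ ∂m ≤ ‖g - v‖ := by
    rw [integral_norm_eq_lintegral_enorm (Lp.aestronglyMeasurable _)]
    have h1 : (∫⁻ x, ‖(g - v) x‖ₑ ∂m) = eLpNorm ⇑(g - v) 1 m :=
      (eLpNorm_one_eq_lintegral_enorm).symm
    rw [h1, Lp.norm_def]
    exact ENNReal.toReal_mono (Lp.eLpNorm_ne_top _)
      (eLpNorm_le_eLpNorm_of_exponent_le one_le_two (Lp.aestronglyMeasurable _))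
  have hnormlt : ‖g - v‖ < ε/2 := by
    rw [← dist_eq_norm, dist_comm]
    exact hdist
  have hgv : ∫ x, ‖(g - v) x‖ ∂m < ε/2 := lt_of_le_of_lt hL1L2 hnormlt
  have hvcint : ∫ x, vc x ∂m = c := by
    rw [hvc]
    have h1 : ∀ i ∈ t, Integrable (fun x => (w i • cm (n i)) x) m := fun i _ =>
      cmInt μ _
    have hco : (⇑(∑ i ∈ t, w i • cm (n i)) : X → ℝ) = fun x => ∑ i ∈ t, (w i • cm (n i)) x := by
      funext x; simp
    rw [hco, integral_finset_sum t h1]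
    have h2 : ∀ i ∈ t, ∫ x, (w i • cm (n i)) x ∂m = w i * c := by
      intro i hi
      have hco2 : (fun x => (w i • cm (n i)) x) = fun x => w i * (cm (n i)) x := by
        funext x; simp
      rw [hco2, integral_const_mul]
      congr 1
      exact invIntIter hT hμ u u.continuous (n i)
    rw [Finset.sum_congr rfl h2, ← Finset.sum_mul, hw1, one_mul]
  have hgint : ∫ x, g x ∂m = c := by
    rw [integral_congr_ae hgcoe]
    exact hvcint
  have hvint : ∫ x, v x ∂m = c' := by
    rw [integral_congr_ae hc']
    simp
  have hcc : |c' - c| ≤ ε/2 := by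
    have h1 : ∫ x, (g - v) x ∂m = c - c' := by
      rw [integral_congr_ae (Lp.coeFn_sub g v)]
      have h0 := integral_sub (hint2 g) (hint2 v)
      simp only [Pi.sub_apply] at h0 ⊢
      rw [h0, hgint, hvint]
    have h2 : |c - c'| ≤ ∫ x, ‖(g - v) x‖ ∂m := by
      rw [← h1, ← Real.norm_eq_abs]
      exact norm_integral_le_integral_norm (f := fun x => (g - v) x)
    rw [abs_sub_comm]
    linarith
  refine ⟨vc, ?_, ?_, ?_⟩
  · intro ν hν
    rw [hvc]
    have h1 : ∀ i ∈ t, Integrable (fun x => (w i • cm (n i)) x) (ν : Measure X) :=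
      fun i _ => cmInt ν _
    have hco : (⇑(∑ i ∈ t, w i • cm (n i)) : X → ℝ) = fun x => ∑ i ∈ t, (w i • cm (n i)) x := by
      funext x; simp
    rw [hco, integral_finset_sum t h1]
    have h2 : ∀ i ∈ t, ∫ x, (w i • cm (n i)) x ∂(ν : Measure X)
        = w i * ∫ x, u x ∂(ν : Measure X) := by
      intro i hi
      have hco2 : (fun x => (w i • cm (n i)) x) = fun x => w i * (cm (n i)) x := by
        funext x; simp
      rw [hco2, integral_const_mul]
      congr 1
      exact invIntIter hT hν u u.continuous (n i)
    rw [Finset.sum_congr rfl h2, ← Finset.sum_mul, hw1, one_mul]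
  · intro hu x
    rw [hvcapp]
    apply Finset.sum_nonneg
    intro i hi
    exact mul_nonneg (hw0 i hi) (hu _)
  · have hae : ∀ᵐ x ∂m, |vc x - c'| = ‖(g - v) x‖ := by
      filter_upwards [hgcoe, hc', Lp.coeFn_sub g v] with x h1 h2 h3
      rw [h3]
      simp only [Pi.sub_apply, h1, h2]
      simp [Real.norm_eq_abs, Function.const_apply, abs_sub_comm]
    have h5 : ∫ x, |vc x - c'| ∂m < ε/2 := by
      rw [integral_congr_ae hae]
      exact hgv
    have h6 : ∫ x, |vc x - c| ∂m ≤ ∫ x, |vc x - c'| ∂m + |c' - c| := by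
      have hcont1 : Continuous fun x => |vc x - c| :=
        ((map_continuous vc).sub continuous_const).abs
      have hcont2 : Continuous fun x => |vc x - c'| :=
        ((map_continuous vc).sub continuous_const).abs
      have hcont3 : Continuous fun x => |vc x - c'| + |c' - c| :=
        hcont2.add continuous_const
      have hi1 : Integrable (fun x => |vc x - c|) m := cmInt μ ⟨_, hcont1⟩
      have hi2 : Integrable (fun x => |vc x - c'|) m := cmInt μ ⟨_, hcont2⟩
      have hi3 : Integrable (fun x => |vc x - c'| + |c' - c|) m := cmInt μ ⟨_, hcont3⟩
      have h7 := integral_mono hi1 hi3 (fun x => by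
        have hx : vc x - c = (vc x - c') + (c' - c) := by ring
        calc |vc x - c| = |(vc x - c') + (c' - c)| := by rw [hx]
        _ ≤ |vc x - c'| + |c' - c| := abs_add_le _ _)
      have h8 : ∫ x, (|vc x - c'| + |c' - c|) ∂m
          = ∫ x, |vc x - c'| ∂m + |c' - c| := by
        rw [integral_add hi2 (integrable_const _)]
        simp
      rw [h8] at h7
      exact h7
    linarith

lemma cmIntAbs (ν : ProbabilityMeasure X) (f : C(X, ℝ)) (d : ℝ) :
    Integrable (fun x => |f x - d|) (ν : Measure X) :=
  cmInt ν ⟨_, ((map_continuous f).sub continuous_const).abs⟩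

lemma stepLem (T : X → X) (hT : Continuous T) (μ : ProbabilityMeasure X)
    (hμ : μ ∈ InvMeas T) (herg : Ergodic T (μ : Measure X))
    (A B : C(X, ℝ)) (hA : ∀ x, 0 ≤ A x) (hB : ∀ x, 0 ≤ B x)
    (hAB : ∫ x, A x ∂(μ : Measure X) = ∫ x, B x ∂(μ : Measure X)) :
    ∃ q : (C(X, ℝ) × C(X, ℝ)) × C(X, ℝ),
      (∀ x, 0 ≤ q.1.1 x) ∧ (∀ x, 0 ≤ q.1.2 x) ∧
      (∫ x, q.1.1 x ∂(μ : Measure X) = ∫ x, q.1.2 x ∂(μ : Measure X)) ∧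
      (∫ x, q.1.1 x ∂(μ : Measure X) ≤ (∫ x, A x ∂(μ : Measure X)) / 2) ∧
      (∀ x, 0 ≤ q.2 x ∧ q.2 x ≤ ∫ y, A y ∂(μ : Measure X)) ∧
      (∀ ν ∈ InvMeas T,
        (∫ x, q.1.1 x ∂(ν : Measure X)
          = ∫ x, A x ∂(ν : Measure X) - ∫ x, q.2 x ∂(ν : Measure X)) ∧
        (∫ x, q.1.2 x ∂(ν : Measure X)
          = ∫ x, B x ∂(ν : Measure X) - ∫ x, q.2 x ∂(ν : Measure X))) := by
  classical
  set δ : ℝ := ∫ x, A x ∂(μ : Measure X) with hδ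
  have hδ0 : 0 ≤ δ := integral_nonneg fun x => hA x
  rcases eq_or_lt_of_le hδ0 with hzero | hpos
  · -- δ = 0 : trivial step
    refine ⟨((A, B), 0), hA, hB, hAB, ?_, ?_, ?_⟩
    · rw [← hδ, ← hzero]; norm_num
    · intro x
      simp [← hzero]
    · intro ν hν
      constructor <;> simp
  · obtain ⟨vA, hvAinv, hvApos, hvAL1⟩ := met T hT μ hμ herg A (by positivity : (0:ℝ) < δ/8)
    obtain ⟨vB, hvBinv, hvBpos, hvBL1⟩ := met T hT μ hμ herg B (by positivity : (0:ℝ) < δ/8)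
    rw [← hAB] at hvBL1
    rw [← hδ] at hvAL1
    set r : C(X, ℝ) := ⟨fun x => min (vA x) (min (vB x) δ),
      ((map_continuous vA).min ((map_continuous vB).min continuous_const))⟩ with hr
    have hrapp : ∀ x, r x = min (vA x) (min (vB x) δ) := fun x => rfl
    refine ⟨((vA - r, vB - r), r), ?_, ?_, ?_, ?_, ?_, ?_⟩
    · intro x
      simp only [ContinuousMap.sub_apply, hrapp, sub_nonneg]
      exact min_le_left _ _
    · intro x
      simp only [ContinuousMap.sub_apply, hrapp, sub_nonneg]
      exact (min_le_right _ _).trans (min_le_left _ _)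
    · have h1 : ∫ x, (vA - r) x ∂(μ : Measure X)
          = ∫ x, vA x ∂(μ : Measure X) - ∫ x, r x ∂(μ : Measure X) := by
        simp only [ContinuousMap.sub_apply]
        exact integral_sub (cmInt μ vA) (cmInt μ r)
      have h2 : ∫ x, (vB - r) x ∂(μ : Measure X)
          = ∫ x, vB x ∂(μ : Measure X) - ∫ x, r x ∂(μ : Measure X) := by
        simp only [ContinuousMap.sub_apply]
        exact integral_sub (cmInt μ vB) (cmInt μ r)
      rw [h1, h2, hvAinv μ hμ, hvBinv μ hμ, ← hδ, hAB]
    · have hpw : ∀ x, (vA - r) x ≤ 2 * |vA x - δ| + |vB x - δ| := by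
        intro x
        have e1 : -(vA x - δ) ≤ |vA x - δ| := neg_le_abs _
        have e2 : vA x - δ ≤ |vA x - δ| := le_abs_self _
        have e3 : -(vB x - δ) ≤ |vB x - δ| := neg_le_abs _
        have e4 : vB x - δ ≤ |vB x - δ| := le_abs_self _
        have habs : (0:ℝ) ≤ |vA x - δ| := abs_nonneg _
        have habs2 : (0:ℝ) ≤ |vB x - δ| := abs_nonneg _
        simp only [ContinuousMap.sub_apply, hrapp]
        rcases min_cases (vA x) (min (vB x) δ) with ⟨hmeq, _⟩ | ⟨hmeq, _⟩
        · rw [hmeq]; linarith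
        · rw [hmeq]
          rcases min_cases (vB x) δ with ⟨hmeq2, _⟩ | ⟨hmeq2, _⟩
          · rw [hmeq2]; linarith
          · rw [hmeq2]; linarith
      have hint : Integrable (fun x => 2 * |vA x - δ| + |vB x - δ|) (μ : Measure X) :=
        ((cmIntAbs μ vA δ).const_mul 2).add (cmIntAbs μ vB δ)
      have h3 := integral_mono (cmInt μ (vA - r)) hint hpw
      have h4 : ∫ x, (2 * |vA x - δ| + |vB x - δ|) ∂(μ : Measure X)
          = 2 * ∫ x, |vA x - δ| ∂(μ : Measure X) + ∫ x, |vB x - δ| ∂(μ : Measure X) := by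
        rw [integral_add ((cmIntAbs μ vA δ).const_mul 2) (cmIntAbs μ vB δ),
          integral_const_mul]
      rw [h4] at h3
      calc ∫ x, (vA - r) x ∂(μ : Measure X)
          ≤ 2 * ∫ x, |vA x - δ| ∂(μ : Measure X) + ∫ x, |vB x - δ| ∂(μ : Measure X) := h3
        _ ≤ 2 * (δ/8) + δ/8 := by
            have := hvAL1
            have := hvBL1
            have hnn : 0 ≤ ∫ x, |vA x - δ| ∂(μ : Measure X) :=
              integral_nonneg fun x => abs_nonneg _
            linarith
        _ ≤ δ / 2 := by linarith
    · intro x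
      constructor
      · simp only [hrapp]
        exact le_min (hvApos hA x) (le_min (hvBpos hB x) hδ0)
      · simp only [hrapp, ← hδ]
        exact (min_le_right _ _).trans (min_le_right _ _)
    · intro ν hν
      have h1 : ∫ x, (vA - r) x ∂(ν : Measure X)
          = ∫ x, vA x ∂(ν : Measure X) - ∫ x, r x ∂(ν : Measure X) := by
        simp only [ContinuousMap.sub_apply]
        exact integral_sub (cmInt ν vA) (cmInt ν r)
      have h2 : ∫ x, (vB - r) x ∂(ν : Measure X)
          = ∫ x, vB x ∂(ν : Measure X) - ∫ x, r x ∂(ν : Measure X) := by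
        simp only [ContinuousMap.sub_apply]
        exact integral_sub (cmInt ν vB) (cmInt ν r)
      rw [h1, h2, hvAinv ν hν, hvBinv ν hν]
      exact ⟨rfl, rfl⟩

lemma intCont (ν : ProbabilityMeasure X) :
    Continuous fun f : C(X, ℝ) => ∫ x, f x ∂(ν : Measure X) := by
  refine (LipschitzWith.of_dist_le_mul (K := 1) ?_).continuous
  intro f g
  rw [Real.dist_eq, NNReal.coe_one, one_mul, dist_eq_norm]
  have h1 : ∫ x, f x ∂(ν : Measure X) - ∫ x, g x ∂(ν : Measure X)
      = ∫ x, (f - g) x ∂(ν : Measure X) := by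
    simp only [ContinuousMap.sub_apply]
    exact (integral_sub (cmInt ν f) (cmInt ν g)).symm
  rw [h1, ← Real.norm_eq_abs]
  calc ‖∫ x, (f - g) x ∂(ν : Measure X)‖
      ≤ ∫ x, ‖(f - g) x‖ ∂(ν : Measure X) :=
        norm_integral_le_integral_norm (f := fun x => (f - g) x)
    _ ≤ ∫ _x, ‖f - g‖ ∂(ν : Measure X) := by
        refine integral_mono ((cmInt ν (f-g)).norm) (integrable_const _) ?_
        intro x
        exact (f - g).norm_coe_le_norm x
    _ = ‖f - g‖ := by simp

lemma recLem (T : X → X) (hT : Continuous T) (μ : ProbabilityMeasure X)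
    (hμ : μ ∈ InvMeas T) (herg : Ergodic T (μ : Measure X))
    (A B : C(X, ℝ)) (hA : ∀ x, 0 ≤ A x) (hB : ∀ x, 0 ≤ B x)
    (hAB : ∫ x, A x ∂(μ : Measure X) = ∫ x, B x ∂(μ : Measure X)) :
    ∃ r : C(X, ℝ),
      (∀ ν ∈ InvMeas T,
        ∫ x, r x ∂(ν : Measure X) ≤ ∫ x, A x ∂(ν : Measure X) ∧
        ∫ x, r x ∂(ν : Measure X) ≤ ∫ x, B x ∂(ν : Measure X)) ∧
      ∫ x, r x ∂(μ : Measure X) = ∫ x, A x ∂(μ : Measure X) := by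
  classical
  set Good : C(X, ℝ) × C(X, ℝ) → Prop := fun p =>
    (∀ x, 0 ≤ p.1 x) ∧ (∀ x, 0 ≤ p.2 x) ∧
      ∫ x, p.1 x ∂(μ : Measure X) = ∫ x, p.2 x ∂(μ : Measure X) with hGood
  have hstep : ∀ p : {p // Good p}, ∃ q : (C(X, ℝ) × C(X, ℝ)) × C(X, ℝ), Good q.1 ∧
      (∫ x, q.1.1 x ∂(μ : Measure X) ≤ (∫ x, p.1.1 x ∂(μ : Measure X)) / 2) ∧
      (∀ x, 0 ≤ q.2 x ∧ q.2 x ≤ ∫ y, p.1.1 y ∂(μ : Measure X)) ∧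
      (∀ ν ∈ InvMeas T,
        (∫ x, q.1.1 x ∂(ν : Measure X)
          = ∫ x, p.1.1 x ∂(ν : Measure X) - ∫ x, q.2 x ∂(ν : Measure X)) ∧
        (∫ x, q.1.2 x ∂(ν : Measure X)
          = ∫ x, p.1.2 x ∂(ν : Measure X) - ∫ x, q.2 x ∂(ν : Measure X))) := by
    rintro ⟨⟨pA, pB⟩, h1, h2, h3⟩
    obtain ⟨q, s1, s2, s3, s4, s5, s6⟩ := stepLem T hT μ hμ herg pA pB h1 h2 h3
    exact ⟨q, ⟨s1, s2, s3⟩, s4, s5, s6⟩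
  choose stepF hstepF using hstep
  set seq : ℕ → {p // Good p} := fun n =>
    Nat.rec ⟨(A, B), ⟨hA, hB, hAB⟩⟩ (fun _ p => ⟨(stepF p).1, (hstepF p).1⟩) n with hseq
  have hseqsucc : ∀ n, (seq (n+1) : {p // Good p}) = ⟨(stepF (seq n)).1, (hstepF (seq n)).1⟩ :=
    fun n => rfl
  set rr : ℕ → C(X, ℝ) := fun n => (stepF (seq n)).2 with hrr
  set An : ℕ → C(X, ℝ) := fun n => (seq n).1.1 with hAn
  set Bn : ℕ → C(X, ℝ) := fun n => (seq n).1.2 with hBn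
  set δn : ℕ → ℝ := fun n => ∫ x, An n x ∂(μ : Measure X) with hδn
  have hA0 : An 0 = A := rfl
  have hB0 : Bn 0 = B := rfl
  have hδpos : ∀ n, 0 ≤ δn n := fun n => integral_nonneg fun x => ((seq n).2).1 x
  have hhalf : ∀ n, δn (n+1) ≤ δn n / 2 := fun n => (hstepF (seq n)).2.1
  have hgeo : ∀ n, δn n ≤ δn 0 * (1/2)^n := by
    intro n
    induction n with
    | zero => simp
    | succ n ih =>
        have := hhalf n
        have h2 : (1/2:ℝ)^(n+1) = (1/2)^n * (1/2) := pow_succ _ _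
        rw [h2]
        calc δn (n+1) ≤ δn n / 2 := this
          _ ≤ (δn 0 * (1/2)^n) / 2 := by linarith
          _ = δn 0 * ((1/2)^n * (1/2)) := by ring
  have hrbd : ∀ n, ∀ x, 0 ≤ rr n x ∧ rr n x ≤ δn n := fun n => (hstepF (seq n)).2.2.1
  have hrnorm : ∀ n, ‖rr n‖ ≤ δn 0 * (1/2)^n := by
    intro n
    refine (ContinuousMap.norm_le _ (mul_nonneg (hδpos 0) (by positivity))).mpr ?_
    intro x
    rw [Real.norm_eq_abs, abs_of_nonneg (hrbd n x).1]
    exact (hrbd n x).2.trans (hgeo n)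
  have hsum : Summable rr := by
    refine Summable.of_norm_bounded (g := fun n => δn 0 * (1/2)^n) ?_ hrnorm
    exact (summable_geometric_two).mul_left _
  set R : C(X, ℝ) := ∑' n, rr n with hR
  have htend : Tendsto (fun K => ∑ n ∈ Finset.range K, rr n) atTop (𝓝 R) :=
    hsum.hasSum.tendsto_sum_nat
  have hsum_int : ∀ (ν : ProbabilityMeasure X) (K : ℕ),
      ∫ x, (∑ n ∈ Finset.range K, rr n) x ∂(ν : Measure X)
        = ∑ n ∈ Finset.range K, ∫ x, rr n x ∂(ν : Measure X) := by
    intro ν K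
    have hco : (⇑(∑ n ∈ Finset.range K, rr n) : X → ℝ)
        = fun x => ∑ n ∈ Finset.range K, rr n x := by
      funext x
      simp [ContinuousMap.coe_sum, Finset.sum_apply]
    rw [hco, integral_finset_sum _ (fun n _ => cmInt ν (rr n))]
  have hIlim : ∀ ν : ProbabilityMeasure X,
      Tendsto (fun K => ∑ n ∈ Finset.range K, ∫ x, rr n x ∂(ν : Measure X)) atTop
        (𝓝 (∫ x, R x ∂(ν : Measure X))) := by
    intro ν
    have h1 := ((intCont ν).tendsto R).comp htend
    have h2 : (fun K => ∫ x, (∑ n ∈ Finset.range K, rr n) x ∂(ν : Measure X))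
        = fun K => ∑ n ∈ Finset.range K, ∫ x, rr n x ∂(ν : Measure X) := by
      funext K
      exact hsum_int ν K
    rw [← h2]
    exact h1
  have hpart : ∀ ν, ν ∈ InvMeas T → ∀ K : ℕ,
      (∑ n ∈ Finset.range K, ∫ x, rr n x ∂(ν : Measure X)
        = ∫ x, A x ∂(ν : Measure X) - ∫ x, An K x ∂(ν : Measure X)) ∧
      (∑ n ∈ Finset.range K, ∫ x, rr n x ∂(ν : Measure X)
        = ∫ x, B x ∂(ν : Measure X) - ∫ x, Bn K x ∂(ν : Measure X)) := by
    intro ν hν K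
    induction K with
    | zero => simp [hA0, hB0]
    | succ K ih =>
        have hs := (hstepF (seq K)).2.2.2 ν hν
        constructor
        · rw [Finset.sum_range_succ, ih.1]
          have : ∫ x, An (K+1) x ∂(ν : Measure X)
              = ∫ x, An K x ∂(ν : Measure X) - ∫ x, rr K x ∂(ν : Measure X) := hs.1
          rw [this]
          ring
        · rw [Finset.sum_range_succ, ih.2]
          have : ∫ x, Bn (K+1) x ∂(ν : Measure X)
              = ∫ x, Bn K x ∂(ν : Measure X) - ∫ x, rr K x ∂(ν : Measure X) := hs.2
          rw [this]
          ring
  refine ⟨R, ?_, ?_⟩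
  · intro ν hν
    constructor
    · have h1 : Tendsto (fun K => ∫ x, A x ∂(ν : Measure X)
          - ∑ n ∈ Finset.range K, ∫ x, rr n x ∂(ν : Measure X)) atTop
          (𝓝 (∫ x, A x ∂(ν : Measure X) - ∫ x, R x ∂(ν : Measure X))) :=
        tendsto_const_nhds.sub (hIlim ν)
      have h2 : ∀ K, 0 ≤ ∫ x, A x ∂(ν : Measure X)
          - ∑ n ∈ Finset.range K, ∫ x, rr n x ∂(ν : Measure X) := by
        intro K
        rw [(hpart ν hν K).1]
        have : 0 ≤ ∫ x, An K x ∂(ν : Measure X) :=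
          integral_nonneg fun x => ((seq K).2).1 x
        linarith
      have := ge_of_tendsto h1 (Eventually.of_forall h2)
      linarith
    · have h1 : Tendsto (fun K => ∫ x, B x ∂(ν : Measure X)
          - ∑ n ∈ Finset.range K, ∫ x, rr n x ∂(ν : Measure X)) atTop
          (𝓝 (∫ x, B x ∂(ν : Measure X) - ∫ x, R x ∂(ν : Measure X))) :=
        tendsto_const_nhds.sub (hIlim ν)
      have h2 : ∀ K, 0 ≤ ∫ x, B x ∂(ν : Measure X)
          - ∑ n ∈ Finset.range K, ∫ x, rr n x ∂(ν : Measure X) := by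
        intro K
        rw [(hpart ν hν K).2]
        have : 0 ≤ ∫ x, Bn K x ∂(ν : Measure X) :=
          integral_nonneg fun x => ((seq K).2).2.1 x
        linarith
      have := ge_of_tendsto h1 (Eventually.of_forall h2)
      linarith
  · -- at μ the deficit tends to 0
    have h1 : Tendsto (fun K => ∫ x, A x ∂(μ : Measure X)
        - ∑ n ∈ Finset.range K, ∫ x, rr n x ∂(μ : Measure X)) atTop
        (𝓝 (∫ x, A x ∂(μ : Measure X) - ∫ x, R x ∂(μ : Measure X))) :=
      tendsto_const_nhds.sub (hIlim μ)
    have h2 : ∀ K, ∫ x, A x ∂(μ : Measure X)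
        - ∑ n ∈ Finset.range K, ∫ x, rr n x ∂(μ : Measure X) = δn K := by
      intro K
      rw [(hpart μ hμ K).1]
      have hh : δn K = ∫ x, An K x ∂(μ : Measure X) := rfl
      rw [hh]
      ring
    have h3 : Tendsto δn atTop (𝓝 0) := by
      refine squeeze_zero hδpos hgeo ?_
      have h4 : Tendsto (fun n : ℕ => (1/2:ℝ)^n) atTop (𝓝 0) := by
        apply tendsto_pow_atTop_nhds_zero_of_lt_one <;> norm_num
      have := h4.const_mul (δn 0)
      simpa using this
    have h5 : Tendsto (fun K => ∫ x, A x ∂(μ : Measure X)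
        - ∑ n ∈ Finset.range K, ∫ x, rr n x ∂(μ : Measure X)) atTop (𝓝 0) := by
      simp_rw [h2]
      exact h3
    have h6 := tendsto_nhds_unique h1 h5
    linarith

theorem stmt2
    (T : X → X) (hT : Continuous T) (hne : (InvMeas T).Nonempty)
    (h : ProbabilityMeasure X → ℝ)
    (hbd : ∃ C : ℝ, ∀ μ ∈ InvMeas T, |h μ| ≤ C)
    (haff : ∀ μ ν : ProbabilityMeasure X, μ ∈ InvMeas T → ν ∈ InvMeas T →
      ∀ t : ℝ, 0 ≤ t → t ≤ 1 → ∀ σ : ProbabilityMeasure X,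
        (σ : Measure X) =
          ENNReal.ofReal t • (μ : Measure X) + ENNReal.ofReal (1 - t) • (ν : Measure X) →
        h σ = t * h μ + (1 - t) * h ν)
    (μ : ProbabilityMeasure X) (hμ : μ ∈ InvMeas T) (herg : Ergodic T (μ : Measure X)) :
    (∃ φ : C(X, ℝ), {ν | IsEquilib T h φ ν} = {μ}) ↔
      (∃ ψ : C(X, ℝ), ∀ β : ℝ, 1 ≤ β → {ν | IsEquilib T h (β • ψ) ν} = {μ}) := by
  constructor
  · rintro ⟨φ, hφ⟩
    classical
    set c : ℝ := ∫ x, φ x ∂(μ : Measure X) with hc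
    set A : C(X, ℝ) := ⟨fun x => max (φ x - c) 0,
      ((map_continuous φ).sub continuous_const).max continuous_const⟩ with hAdef
    set B : C(X, ℝ) := ⟨fun x => max (c - φ x) 0,
      (continuous_const.sub (map_continuous φ)).max continuous_const⟩ with hBdef
    have hA : ∀ x, 0 ≤ A x := fun x => le_max_right _ _
    have hB : ∀ x, 0 ≤ B x := fun x => le_max_right _ _
    have hphiAB : ∀ x, A x - B x = φ x - c := by
      intro x
      show max (φ x - c) 0 - max (c - φ x) 0 = φ x - c
      rcases le_total (φ x) c with hx | hx
      · rw [max_eq_right (by linarith), max_eq_left (by linarith)]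
        ring
      · rw [max_eq_left (by linarith), max_eq_right (by linarith)]
        ring
    have hABint : ∀ ν : ProbabilityMeasure X,
        ∫ x, A x ∂(ν : Measure X) - ∫ x, B x ∂(ν : Measure X)
          = ∫ x, φ x ∂(ν : Measure X) - c := by
      intro ν
      rw [← integral_sub (cmInt ν A) (cmInt ν B)]
      have : ∀ x, A x - B x = φ x - c := hphiAB
      calc ∫ x, (A x - B x) ∂(ν : Measure X) = ∫ x, (φ x - c) ∂(ν : Measure X) := by
            exact integral_congr_ae (Eventually.of_forall this)
        _ = ∫ x, φ x ∂(ν : Measure X) - c := by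
            rw [integral_sub (cmInt ν φ) (integrable_const _)]
            simp
    have hAB : ∫ x, A x ∂(μ : Measure X) = ∫ x, B x ∂(μ : Measure X) := by
      have := hABint μ
      rw [← hc] at this
      linarith
    obtain ⟨r, hrineq, hrμ⟩ := recLem T hT μ hμ herg A B hA hB hAB
    set ψ : C(X, ℝ) := φ + r - A with hψdef
    have hψapp : ∀ (ν : ProbabilityMeasure X), ∫ x, ψ x ∂(ν : Measure X)
        = ∫ x, φ x ∂(ν : Measure X) + ∫ x, r x ∂(ν : Measure X)
          - ∫ x, A x ∂(ν : Measure X) := by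
      intro ν
      have hco : (⇑ψ : X → ℝ) = fun x => φ x + r x - A x := by
        funext x
        simp [hψdef]
      rw [hco]
      have hadd : Integrable (fun x => φ x + r x) (ν : Measure X) :=
        (cmInt ν φ).add (cmInt ν r)
      have h1 : ∫ x, (φ x + r x - A x) ∂(ν : Measure X)
          = ∫ x, (φ x + r x) ∂(ν : Measure X) - ∫ x, A x ∂(ν : Measure X) :=
        integral_sub hadd (cmInt ν A)
      have h2 : ∫ x, (φ x + r x) ∂(ν : Measure X)
          = ∫ x, φ x ∂(ν : Measure X) + ∫ x, r x ∂(ν : Measure X) :=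
        integral_add (cmInt ν φ) (cmInt ν r)
      rw [h1, h2]
    have hψμ : ∫ x, ψ x ∂(μ : Measure X) = c := by
      rw [hψapp μ, hrμ, ← hc]
      ring
    have hψle : ∀ ν ∈ InvMeas T, ∫ x, ψ x ∂(ν : Measure X) ≤ c
        ∧ ∫ x, ψ x ∂(ν : Measure X) ≤ ∫ x, φ x ∂(ν : Measure X) := by
      intro ν hν
      obtain ⟨hr1, hr2⟩ := hrineq ν hν
      constructor
      · rw [hψapp ν]
        have h3 := hABint ν
        linarith
      · rw [hψapp ν]
        linarith
    -- facts from the equilibrium hypothesis for φ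
    have hμequi : IsEquilib T h φ μ := by
      have : μ ∈ ({μ} : Set (ProbabilityMeasure X)) := rfl
      rw [← hφ] at this
      exact this
    have hpressφ : press T h φ = h μ + c := (hμequi.2).symm
    have hbdd : BddAbove ((fun ν : ProbabilityMeasure X =>
        h ν + ∫ x, φ x ∂(ν : Measure X)) '' InvMeas T) := by
      obtain ⟨C, hC⟩ := hbd
      refine ⟨C + ‖φ‖, ?_⟩
      rintro _ ⟨ν, hν, rfl⟩
      show h ν + ∫ x, φ x ∂(ν : Measure X) ≤ C + ‖φ‖
      have h1 : h ν ≤ C := (abs_le.mp (hC ν hν)).2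
      have h2 : ∫ x, φ x ∂(ν : Measure X) ≤ ‖φ‖ := by
        calc ∫ x, φ x ∂(ν : Measure X) ≤ |∫ x, φ x ∂(ν : Measure X)| := le_abs_self _
          _ = ‖∫ x, φ x ∂(ν : Measure X)‖ := (Real.norm_eq_abs _).symm
          _ ≤ ∫ x, ‖φ x‖ ∂(ν : Measure X) :=
              norm_integral_le_integral_norm (f := fun x => φ x)
          _ ≤ ∫ _x, ‖φ‖ ∂(ν : Measure X) := by
              refine integral_mono (cmInt ν φ).norm (integrable_const _) ?_
              intro x
              exact φ.norm_coe_le_norm x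
          _ = ‖φ‖ := by simp
      linarith
    have hstrict : ∀ ν ∈ InvMeas T, ν ≠ μ →
        h ν + ∫ x, φ x ∂(ν : Measure X) < h μ + c := by
      intro ν hν hne2
      have hnotin : ¬ IsEquilib T h φ ν := by
        intro hcon
        have : ν ∈ {ν' | IsEquilib T h φ ν'} := hcon
        rw [hφ] at this
        exact hne2 this
      have hle : h ν + ∫ x, φ x ∂(ν : Measure X) ≤ press T h φ :=
        le_csSup hbdd ⟨ν, hν, rfl⟩
      rw [hpressφ] at hle
      rcases eq_or_lt_of_le hle with heq | hlt
      · exfalso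
        exact hnotin ⟨hν, by rw [heq, hpressφ]⟩
      · exact hlt
    refine ⟨ψ, ?_⟩
    intro β hβ
    have hβψint : ∀ ν : ProbabilityMeasure X,
        ∫ x, (β • ψ) x ∂(ν : Measure X) = β * ∫ x, ψ x ∂(ν : Measure X) := by
      intro ν
      have hco : (⇑(β • ψ) : X → ℝ) = fun x => β * ψ x := by
        funext x
        simp
      rw [hco, integral_const_mul]
    have key : ∀ ν ∈ InvMeas T, ν ≠ μ →
        h ν + β * ∫ x, ψ x ∂(ν : Measure X) < h μ + β * c := by
      intro ν hν hne2
      obtain ⟨hle1, hle2⟩ := hψle ν hν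
      have hD : ∫ x, ψ x ∂(ν : Measure X) - c ≤ 0 := by linarith
      have hβD : β * (∫ x, ψ x ∂(ν : Measure X) - c)
          ≤ ∫ x, ψ x ∂(ν : Measure X) - c := by nlinarith
      have hs := hstrict ν hν hne2
      nlinarith
    have hpressψ : press T h (β • ψ) = h μ + β * c := by
      apply IsGreatest.csSup_eq
      constructor
      · refine ⟨μ, hμ, ?_⟩
        show h μ + ∫ x, (β • ψ) x ∂(μ : Measure X) = h μ + β * c
        rw [hβψint μ, hψμ]
      · rintro _ ⟨ν, hν, rfl⟩
        show h ν + ∫ x, (β • ψ) x ∂(ν : Measure X) ≤ h μ + β * c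
        rw [hβψint ν]
        rcases eq_or_ne ν μ with rfl | hne2
        · rw [hψμ]
        · exact le_of_lt (key ν hν hne2)
    ext ν
    simp only [Set.mem_setOf_eq, Set.mem_singleton_iff]
    constructor
    · rintro ⟨hν, heq⟩
      by_contra hne2
      rw [hβψint ν, hpressψ] at heq
      exact absurd heq (ne_of_lt (key ν hν hne2))
    · rintro rfl
      exact ⟨hμ, by rw [hβψint ν, hψμ, hpressψ]⟩
  · rintro ⟨ψ, hψ⟩
    refine ⟨ψ, ?_⟩
    have := hψ 1 le_rfl
    rwa [one_smul] at this
end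

section
/- Suppose ψ ∈ C(X), μ∞ ∈ M_T(X) and β₀ > 0 satisfy: μ∞ is an equilibrium state for βψ for every β ≥ β₀, and ∫ ψ dμ∞ = 0. Let φ ∈ C(X) be such that ∫ φ dμ∞ = Max(φ). Then for every ε > 0 and every t ≥ β₀/ε, μ∞ is an equilibrium state for t(φ + εψ); in particular, φ + εψ freezes at μ∞. -/
open MeasureTheory Filter Set
open scoped NNReal ENNReal

variable {X : Type*} [MetricSpace X] [CompactSpace X] [Nonempty X]
  [MeasurableSpace X] [BorelSpace X]

lemma cm_integrable (f : C(X, ℝ)) (ν : ProbabilityMeasure X) :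
    Integrable f (ν : Measure X) :=
  f.continuous.integrable_of_hasCompactSupport (HasCompactSupport.of_compactSpace f)

lemma cm_abs_integral_le (f : C(X, ℝ)) (ν : ProbabilityMeasure X) :
    |∫ x, f x ∂(ν : Measure X)| ≤ ‖f‖ := by
  have := norm_integral_le_of_norm_le_const
    (μ := (ν : Measure X)) (f := fun x => f x) (C := ‖f‖)
    (Filter.Eventually.of_forall fun x => f.norm_coe_le_norm x)
  simpa [Real.norm_eq_abs] using this

lemma maxint_bddAbove (T : X → X) (φ : C(X, ℝ)) :
    BddAbove ((fun μ : ProbabilityMeasure X => ∫ x, φ x ∂(μ : Measure X)) '' InvMeas T) := by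
  refine ⟨‖φ‖, ?_⟩
  rintro a ⟨ν, -, rfl⟩
  exact (abs_le.1 (cm_abs_integral_le φ ν)).2

lemma press_bddAbove (T : X → X) (h : ProbabilityMeasure X → ℝ)
    (hbd : ∃ C : ℝ, ∀ μ ∈ InvMeas T, |h μ| ≤ C) (φ : C(X, ℝ)) :
    BddAbove ((fun μ : ProbabilityMeasure X => h μ + ∫ x, φ x ∂(μ : Measure X)) '' InvMeas T) := by
  obtain ⟨C, hC⟩ := hbd
  refine ⟨C + ‖φ‖, ?_⟩
  rintro a ⟨ν, hν, rfl⟩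
  exact add_le_add (abs_le.1 (hC ν hν)).2 (abs_le.1 (cm_abs_integral_le φ ν)).2

theorem stmt5
    (T : X → X) (hT : Continuous T) (hne : (InvMeas T).Nonempty)
    (h : ProbabilityMeasure X → ℝ)
    (hbd : ∃ C : ℝ, ∀ μ ∈ InvMeas T, |h μ| ≤ C)
    (haff : ∀ μ ν : ProbabilityMeasure X, μ ∈ InvMeas T → ν ∈ InvMeas T →
      ∀ t : ℝ, 0 ≤ t → t ≤ 1 → ∀ σ : ProbabilityMeasure X,
        (σ : Measure X) =
          ENNReal.ofReal t • (μ : Measure X) + ENNReal.ofReal (1 - t) • (ν : Measure X) →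
        h σ = t * h μ + (1 - t) * h ν)
    (ψ : C(X, ℝ)) (μinf : ProbabilityMeasure X) (β₀ : ℝ) (hβ₀ : 0 < β₀)
    (hfreeze : ∀ β : ℝ, β₀ ≤ β → IsEquilib T h (β • ψ) μinf)
    (hψint : ∫ x, ψ x ∂(μinf : Measure X) = 0)
    (φ : C(X, ℝ)) (hφmax : ∫ x, φ x ∂(μinf : Measure X) = MaxInt T φ) :
    ∀ ε : ℝ, 0 < ε → ∀ t : ℝ, β₀ / ε ≤ t → IsEquilib T h (t • (φ + ε • ψ)) μinf := by
  intro ε hε t ht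
  have hμinf : μinf ∈ InvMeas T := (hfreeze β₀ le_rfl).1
  have ht0 : 0 < t := lt_of_lt_of_le (div_pos hβ₀ hε) ht
  have htε : β₀ ≤ t * ε := by
    rw [div_le_iff₀ hε] at ht; linarith [ht]
  -- integral of the combined potential
  have hint : ∀ ν : ProbabilityMeasure X,
      ∫ x, (t • (φ + ε • ψ)) x ∂(ν : Measure X)
        = t * (∫ x, φ x ∂(ν : Measure X)) + (t * ε) * (∫ x, ψ x ∂(ν : Measure X)) := by
    intro ν
    have h1 : ∀ x, (t • (φ + ε • ψ)) x = t * φ x + (t * ε) * ψ x := by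
      intro x; simp [mul_add]; ring
    simp only [h1]
    rw [integral_add ((cm_integrable φ ν).const_mul t) ((cm_integrable ψ ν).const_mul (t * ε)),
      integral_const_mul, integral_const_mul]
  -- integral of β • ψ
  have hintψ : ∀ (β : ℝ) (ν : ProbabilityMeasure X),
      ∫ x, (β • ψ) x ∂(ν : Measure X) = β * ∫ x, ψ x ∂(ν : Measure X) := by
    intro β ν
    have h1 : ∀ x, (β • ψ) x = β * ψ x := fun x => rfl
    simp only [h1, integral_const_mul]
  -- pressure of (t*ε) • ψ equals h μinf
  have hpress : press T h ((t * ε) • ψ) = h μinf := by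
    have := (hfreeze (t * ε) htε).2
    rw [hintψ, hψint, mul_zero, add_zero] at this
    exact this.symm
  -- value at μinf
  have hvalinf : h μinf + ∫ x, (t • (φ + ε • ψ)) x ∂(μinf : Measure X)
      = h μinf + t * MaxInt T φ := by
    rw [hint, hψint, hφmax]; ring_nf
  refine ⟨hμinf, ?_⟩
  have hgreat : IsGreatest
      ((fun μ : ProbabilityMeasure X =>
        h μ + ∫ x, (t • (φ + ε • ψ)) x ∂(μ : Measure X)) '' InvMeas T)
      (h μinf + ∫ x, (t • (φ + ε • ψ)) x ∂(μinf : Measure X)) := by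
    constructor
    · exact ⟨μinf, hμinf, rfl⟩
    · rintro a ⟨ν, hν, rfl⟩
      have hψle : h ν + (t * ε) * (∫ x, ψ x ∂(ν : Measure X)) ≤ h μinf := by
        rw [← hpress]
        have hmem : h ν + ∫ x, ((t * ε) • ψ) x ∂(ν : Measure X) ∈
            ((fun μ : ProbabilityMeasure X =>
              h μ + ∫ x, ((t * ε) • ψ) x ∂(μ : Measure X)) '' InvMeas T) := ⟨ν, hν, rfl⟩
        have := le_csSup (press_bddAbove T h hbd ((t * ε) • ψ)) hmem
        rwa [hintψ] at this
      have hφle : ∫ x, φ x ∂(ν : Measure X) ≤ MaxInt T φ :=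
        le_csSup (maxint_bddAbove T φ) ⟨ν, hν, rfl⟩
      have h2 := mul_le_mul_of_nonneg_left hφle ht0.le
      simp only
      rw [hint ν, hint μinf, hψint, hφmax]
      linarith
  exact (hgreat.csSup_eq).symm
end

section
/- Let φ ∈ C(X) satisfy h_∞(φ) = 0 and P(βφ) > β·Max(φ) for all β > 0. Then φ does not freeze: there exist no μ ∈ M_T(X) and β₀ > 0 such that μ is an equilibrium state for βφ for all β ≥ β₀. -/
open MeasureTheory Filter Set
open scoped NNReal ENNReal

variable {X : Type*} [MetricSpace X] [CompactSpace X] [Nonempty X]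
  [MeasurableSpace X] [BorelSpace X]

theorem stmt7
    (T : X → X) (hT : Continuous T) (hne : (InvMeas T).Nonempty)
    (h : ProbabilityMeasure X → ℝ)
    (hbd : ∃ C : ℝ, ∀ μ ∈ InvMeas T, |h μ| ≤ C)
    (haff : ∀ μ ν : ProbabilityMeasure X, μ ∈ InvMeas T → ν ∈ InvMeas T →
      ∀ t : ℝ, 0 ≤ t → t ≤ 1 → ∀ σ : ProbabilityMeasure X,
        (σ : Measure X) =
          ENNReal.ofReal t • (μ : Measure X) + ENNReal.ofReal (1 - t) • (ν : Measure X) →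
        h σ = t * h μ + (1 - t) * h ν)
    (φ : C(X, ℝ)) (hres : hInfty T h φ = 0)
    (hgap : ∀ β : ℝ, 0 < β → β * MaxInt T φ < press T h (β • φ)) :
    ¬ ∃ μ : ProbabilityMeasure X, ∃ β₀ : ℝ, 0 < β₀ ∧
      ∀ β : ℝ, β₀ ≤ β → IsEquilib T h (β • φ) μ := by

  rintro ⟨μ, β₀, hβ₀, heq⟩
  obtain ⟨C, hC⟩ := hbd
  have hμinv : μ ∈ InvMeas T := (heq β₀ le_rfl).1
  have hbdd : BddAbove
      ((fun ν : ProbabilityMeasure X => ∫ x, φ x ∂(ν : Measure X)) '' InvMeas T) := by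
    refine ⟨‖φ‖, ?_⟩
    rintro _ ⟨ν, -, rfl⟩
    have : ‖∫ x, φ x ∂(ν : Measure X)‖ ≤ ‖φ‖ * ((ν : Measure X) Set.univ).toReal := by
      refine norm_integral_le_of_norm_le_const ?_
      exact Filter.Eventually.of_forall fun x => φ.norm_coe_le_norm x
    simpa using (le_trans (le_abs_self _) this)
  have hMax_ge : ∫ x, φ x ∂(μ : Measure X) ≤ MaxInt T φ :=
    le_csSup hbdd ⟨μ, hμinv, rfl⟩
  have key : ∀ β, β₀ ≤ β →
      β * (MaxInt T φ - ∫ x, φ x ∂(μ : Measure X)) < h μ := by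
    intro β hβ
    have hb : (0:ℝ) < β := lt_of_lt_of_le hβ₀ hβ
    have he := (heq β hβ).2
    have hint : ∫ x, (β • φ) x ∂(μ : Measure X) = β * ∫ x, φ x ∂(μ : Measure X) := by
      simp only [ContinuousMap.smul_apply, smul_eq_mul]
      exact integral_const_mul β _
    rw [hint] at he
    have := hgap β hb
    rw [← he] at this
    linarith
  have hd : MaxInt T φ = ∫ x, φ x ∂(μ : Measure X) := by
    by_contra hne'
    set d := MaxInt T φ - ∫ x, φ x ∂(μ : Measure X) with hdd
    have hd0 : 0 < d := lt_of_le_of_ne (by linarith) (by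
      intro hh; exact hne' (by linarith [hh.symm]))
    have hCm : h μ ≤ C := le_of_abs_le (hC μ hμinv)
    have h1 := key (max β₀ ((C + 1) / d)) (le_max_left _ _)
    have h2 : C + 1 ≤ max β₀ ((C + 1) / d) * d := by
      have : (C + 1) / d * d ≤ max β₀ ((C + 1) / d) * d :=
        mul_le_mul_of_nonneg_right (le_max_right _ _) hd0.le
      calc C + 1 = (C + 1) / d * d := by field_simp
        _ ≤ _ := this
    linarith
  have hpos : 0 < h μ := by
    have := key β₀ le_rfl
    rw [hd] at this
    simpa using this
  have hle0 : h μ ≤ 0 := by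
    rw [← hres]
    refine le_csSup ⟨C, ?_⟩ ⟨μ, ⟨hμinv, hd.symm⟩, rfl⟩
    rintro _ ⟨ν, ⟨hν, -⟩, rfl⟩
    exact le_of_abs_le (hC ν hν)
  linarith
end

section
/- Let φ ∈ C(X) and β₀ > 0. Then φ freezes at inverse temperature β₀ (i.e., there exists μ ∈ M_T(X) that is an equilibrium state for βφ for all β ≥ β₀) if and only if P(β₀φ) = β₀·Max(φ) + h_∞(φ) and there exists β > β₀ for which βφ has at least one equilibrium state. -/
open MeasureTheory Filter Set
open scoped NNReal ENNReal

variable {X : Type*} [MetricSpace X] [CompactSpace X] [Nonempty X]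
  [MeasurableSpace X] [BorelSpace X]

set_option linter.unusedSectionVars false
set_option linter.unusedVariables false
set_option maxHeartbeats 1600000

namespace Frz

open BoundedContinuousFunction TopologicalSpace

section Riesz

variable (Λ : (X →ᵇ ℝ≥0) →ₗ[ℝ≥0] ℝ≥0)

/-- the Riesz content for bounded continuous functions on a compact space. -/
noncomputable def rieszContentAux : Compacts X → ℝ≥0 := fun K =>
  sInf (Λ '' { f : X →ᵇ ℝ≥0 | ∀ x ∈ K, (1 : ℝ≥0) ≤ f x })

theorem rieszContentAux_image_nonempty (K : Compacts X) :
    (Λ '' { f : X →ᵇ ℝ≥0 | ∀ x ∈ K, (1 : ℝ≥0) ≤ f x }).Nonempty :=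
  ⟨Λ 1, 1, fun x _ => le_refl _, rfl⟩

theorem rieszContentAux_mono {K₁ K₂ : Compacts X} (h : K₁ ≤ K₂) :
    rieszContentAux Λ K₁ ≤ rieszContentAux Λ K₂ := by
  unfold rieszContentAux
  gcongr
  apply rieszContentAux_image_nonempty

theorem rieszContentAux_le {K : Compacts X} {f : X →ᵇ ℝ≥0} (h : ∀ x ∈ K, (1 : ℝ≥0) ≤ f x) :
    rieszContentAux Λ K ≤ Λ f :=
  csInf_le (OrderBot.bddBelow _) ⟨f, ⟨h, rfl⟩⟩

theorem exists_lt_rieszContentAux_add_pos (K : Compacts X) {ε : ℝ≥0} (εpos : 0 < ε) :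
    ∃ f : X →ᵇ ℝ≥0, (∀ x ∈ K, (1 : ℝ≥0) ≤ f x) ∧ Λ f < rieszContentAux Λ K + ε := by
  obtain ⟨α, ⟨⟨f, f_hyp⟩, α_hyp⟩⟩ :=
    exists_lt_of_csInf_lt (rieszContentAux_image_nonempty Λ K)
      (lt_add_of_pos_right (rieszContentAux Λ K) εpos)
  refine ⟨f, f_hyp.left, ?_⟩
  rw [f_hyp.right]
  exact α_hyp

theorem rieszContentAux_sup_le (K1 K2 : Compacts X) :
    rieszContentAux Λ (K1 ⊔ K2) ≤ rieszContentAux Λ K1 + rieszContentAux Λ K2 := by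
  apply _root_.le_of_forall_pos_le_add
  intro ε εpos
  obtain ⟨f1, f_test_function_K1⟩ := exists_lt_rieszContentAux_add_pos Λ K1 (half_pos εpos)
  obtain ⟨f2, f_test_function_K2⟩ := exists_lt_rieszContentAux_add_pos Λ K2 (half_pos εpos)
  have f_test_function_union : ∀ x ∈ K1 ⊔ K2, (1 : ℝ≥0) ≤ (f1 + f2) x := by
    rintro x (x_in_K1 | x_in_K2)
    · exact le_add_right (f_test_function_K1.left x x_in_K1)
    · exact le_add_left (f_test_function_K2.left x x_in_K2)
  apply (rieszContentAux_le Λ f_test_function_union).trans (le_of_lt _)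
  rw [map_add]
  apply lt_of_lt_of_le (_root_.add_lt_add f_test_function_K1.right f_test_function_K2.right)
    (le_of_eq _)
  rw [add_assoc, add_comm (ε / 2), add_assoc, add_halves ε, add_assoc]

lemma nnreal_calc (a ε : ℝ≥0) (hε : 0 < ε) :
    ∃ δ : ℝ≥0, 0 < δ ∧ δ < 1 ∧ (1 - δ)⁻¹ * (a + ε / 2) ≤ a + ε := by
  have hεR : (0:ℝ) < (ε:ℝ) := NNReal.coe_pos.mpr hε
  have haR : (0:ℝ) ≤ (a:ℝ) := a.coe_nonneg
  refine ⟨(ε / 2) / (a + ε + 1), ?_, ?_, ?_⟩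
  · positivity
  · rw [← NNReal.coe_lt_coe]
    push_cast
    rw [div_lt_one (by positivity)]
    nlinarith
  · set δ : ℝ≥0 := (ε / 2) / (a + ε + 1) with hδ
    have hδR : (δ:ℝ) = ((ε:ℝ)/2) / ((a:ℝ) + ε + 1) := by rw [hδ]; push_cast; ring
    have hδ1R : (δ:ℝ) < 1 := by
      rw [hδR, div_lt_one (by positivity)]
      nlinarith
    have hδ1 : δ ≤ 1 := by
      rw [← NNReal.coe_le_coe]
      exact le_of_lt hδ1R
    rw [← NNReal.coe_le_coe]
    push_cast [NNReal.coe_sub hδ1]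
    rw [inv_mul_le_iff₀ (by linarith)]
    have h1 : (δ:ℝ) * ((a:ℝ) + ε) ≤ (ε:ℝ)/2 := by
      rw [hδR, div_mul_eq_mul_div, div_le_iff₀ (by positivity)]
      nlinarith
    nlinarith

lemma rc_sup_disjoint (K₁ K₂ : Compacts X) (hd : Disjoint (K₁ : Set X) K₂) :
    rieszContentAux Λ (K₁ ⊔ K₂) = rieszContentAux Λ K₁ + rieszContentAux Λ K₂ := by
  refine le_antisymm (rieszContentAux_sup_le Λ K₁ K₂) ?_
  refine le_csInf (rieszContentAux_image_nonempty Λ (K₁ ⊔ K₂)) ?_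
  rintro y ⟨f, hf, rfl⟩
  obtain ⟨g, hg0, hg1, hg01⟩ :=
    exists_continuous_zero_one_of_isClosed K₂.2.isClosed K₁.2.isClosed hd.symm
  set u : X →ᵇ ℝ≥0 :=
    mkOfCompact ⟨fun x => Real.toNNReal (g x), continuous_real_toNNReal.comp g.continuous⟩ with hu
  have hu1 : ∀ x, u x ≤ 1 := by
    intro x
    simp only [hu, mkOfCompact_apply, ContinuousMap.coe_mk]
    exact Real.toNNReal_le_one.mpr (hg01 x).2
  set f₁ : X →ᵇ ℝ≥0 :=
    mkOfCompact ⟨fun x => f x * u x, (f.continuous.mul (by fun_prop))⟩ with hf₁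
  set f₂ : X →ᵇ ℝ≥0 :=
    mkOfCompact ⟨fun x => f x * (1 - u x), (f.continuous.mul (by fun_prop))⟩ with hf₂
  have hsum : f = f₁ + f₂ := by
    ext x
    simp only [hf₁, hf₂, coe_add, Pi.add_apply, mkOfCompact_apply, ContinuousMap.coe_mk]
    rw [← mul_add, add_comm, tsub_add_cancel_of_le (hu1 x), mul_one]
  have h1 : ∀ x ∈ (K₁ : Set X), 1 ≤ f₁ x := by
    intro x hx
    have hfx : 1 ≤ f x := hf x (Or.inl hx)
    have hux : u x = 1 := by
      simp only [hu, mkOfCompact_apply, ContinuousMap.coe_mk]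
      rw [hg1 hx]; simp
    simpa [hf₁, hux] using hfx
  have h2 : ∀ x ∈ (K₂ : Set X), 1 ≤ f₂ x := by
    intro x hx
    have hfx : 1 ≤ f x := hf x (Or.inr hx)
    have hux : u x = 0 := by
      simp only [hu, mkOfCompact_apply, ContinuousMap.coe_mk]
      rw [hg0 hx]; simp
    simpa [hf₂, hux] using hfx
  calc rieszContentAux Λ K₁ + rieszContentAux Λ K₂ ≤ Λ f₁ + Λ f₂ :=
        add_le_add (rieszContentAux_le Λ h1) (rieszContentAux_le Λ h2)
    _ = Λ (f₁ + f₂) := (map_add Λ f₁ f₂).symm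
    _ = Λ f := by rw [← hsum]


/-- The content associated to a positive linear functional. -/
noncomputable def rCont : Content X where
  toFun := rieszContentAux Λ
  mono' K₁ K₂ h := rieszContentAux_mono Λ h
  sup_disjoint' K₁ K₂ hd _ _ := rc_sup_disjoint Λ K₁ K₂ hd
  sup_le' := rieszContentAux_sup_le Λ

lemma rCont_regular : (rCont Λ).ContentRegular := by
  intro K
  refine le_antisymm (le_iInf₂ fun K' hK' =>
    (rCont Λ).mono _ _ (hK'.trans interior_subset)) ?_
  refine ENNReal.le_of_forall_pos_le_add fun ε hε _ => ?_
  obtain ⟨f, hfK, hfΛ⟩ := exists_lt_rieszContentAux_add_pos Λ K (half_pos hε)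
  obtain ⟨δ, hδ0, hδ1, hcalc⟩ := nnreal_calc (rieszContentAux Λ K) ε hε
  have h1δ : (0:ℝ≥0) < 1 - δ := tsub_pos_of_lt hδ1
  have hKc : IsClosed {x : X | 1 - δ ≤ f x} := isClosed_Ici.preimage f.continuous
  set K' : Compacts X := ⟨{x | 1 - δ ≤ f x}, hKc.isCompact⟩ with hK'
  have hopen : IsOpen {x : X | 1 - δ < f x} := isOpen_lt continuous_const f.continuous
  have hsub' : {x : X | 1 - δ < f x} ⊆ interior (K' : Set X) :=
    interior_maximal (fun y (hy : 1 - δ < f y) => le_of_lt hy) hopen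
  have hsub : (K : Set X) ⊆ interior (K' : Set X) := fun x hx =>
    hsub' (lt_of_lt_of_le (tsub_lt_self one_pos hδ0) (hfK x hx))
  refine le_trans (iInf₂_le K' hsub) ?_
  have hlamK' : rieszContentAux Λ K' ≤ (1 - δ)⁻¹ * Λ f := by
    have h1 : ∀ x ∈ (K' : Set X), (1:ℝ≥0) ≤ ((1 - δ)⁻¹ • f) x := by
      intro x hx
      have hfx : 1 - δ ≤ f x := hx
      calc (1:ℝ≥0) = (1 - δ)⁻¹ * (1 - δ) := (inv_mul_cancel₀ h1δ.ne').symm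
        _ ≤ (1 - δ)⁻¹ * f x := mul_le_mul_right hfx _
    have := rieszContentAux_le Λ h1
    rwa [_root_.map_smul, smul_eq_mul] at this
  have : rieszContentAux Λ K' ≤ rieszContentAux Λ K + ε := by
    refine hlamK'.trans ?_
    refine le_trans (mul_le_mul_right (le_of_lt hfΛ) _) hcalc
  show ((rieszContentAux Λ K' : ℝ≥0) : ℝ≥0∞) ≤ ((rieszContentAux Λ K : ℝ≥0) : ℝ≥0∞) + (ε : ℝ≥0∞)
  exact_mod_cast this

lemma rMeasure_compacts (K : Compacts X) [MeasurableSpace X] [BorelSpace X] :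
    (rCont Λ).measure K = (rieszContentAux Λ K : ℝ≥0∞) :=
  Content.measure_eq_content_of_regular (rCont Λ) (rCont_regular Λ) K

lemma rc_top (hmono : ∀ f g : X →ᵇ ℝ≥0, (∀ x, f x ≤ g x) → Λ f ≤ Λ g) : rieszContentAux Λ ⊤ = Λ 1 := by
  refine le_antisymm (rieszContentAux_le Λ fun x _ => le_refl _) ?_
  refine le_csInf (rieszContentAux_image_nonempty Λ ⊤) ?_
  rintro y ⟨f, hf, rfl⟩
  exact hmono 1 f fun x => by simpa using hf x (mem_univ x)

/-- the slice function `min (f x) t - min (f x) s`. -/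
noncomputable def sliceFun (f : X →ᵇ ℝ≥0) (s t : ℝ≥0) : X →ᵇ ℝ≥0 :=
  mkOfCompact ⟨fun x => min (f x) t - min (f x) s,
    ((f.continuous.min continuous_const).sub (f.continuous.min continuous_const))⟩

/-- the compact superlevel set `{x | t ≤ f x}`. -/
noncomputable def kC (f : X →ᵇ ℝ≥0) (t : ℝ≥0) : Compacts X :=
  ⟨{x | t ≤ f x}, (isClosed_Ici.preimage f.continuous).isCompact⟩

lemma sliceFun_apply (f : X →ᵇ ℝ≥0) (s t : ℝ≥0) (x : X) :
    sliceFun f s t x = min (f x) t - min (f x) s := rfl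

lemma sliceFun_le (f : X →ᵇ ℝ≥0) (s t : ℝ≥0) (hst : s ≤ t) (x : X) :
    sliceFun f s t x ≤ t - s := by
  rw [sliceFun_apply, tsub_le_iff_right]
  rcases le_total (f x) s with h | h
  · calc min (f x) t ≤ f x := min_le_left _ _
      _ = min (f x) s := (min_eq_left h).symm
      _ ≤ t - s + min (f x) s := le_add_self
  · calc min (f x) t ≤ t := min_le_right _ _
      _ = t - s + s := (tsub_add_cancel_of_le hst).symm
      _ = t - s + min (f x) s := by rw [min_eq_right h]
  
lemma sliceFun_of_le (f : X →ᵇ ℝ≥0) (s t : ℝ≥0) (x : X) (h : f x ≤ s) (hst : s ≤ t) :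
    sliceFun f s t x = 0 := by
  rw [sliceFun_apply, min_eq_left (h.trans hst), min_eq_left h, tsub_self]

lemma sliceFun_of_ge (f : X →ᵇ ℝ≥0) (s t : ℝ≥0) (x : X) (h : t ≤ f x) (hst : s ≤ t) :
    sliceFun f s t x = t - s := by
  rw [sliceFun_apply, min_eq_right h, min_eq_right (hst.trans h)]

lemma tele_nnreal (c ε : ℝ≥0) (N : ℕ) :
    ∑ i ∈ Finset.range N, (min c (((i:ℝ≥0)+1) * ε) - min c ((i:ℝ≥0) * ε))
      = min c ((N:ℝ≥0) * ε) := by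
  induction N with
  | zero => simp
  | succ n ih =>
    rw [Finset.sum_range_succ, ih, add_comm]
    have h1 : min c ((n:ℝ≥0) * ε) ≤ min c (((n:ℝ≥0)+1) * ε) :=
      min_le_min le_rfl (mul_le_mul_left le_self_add ε)
    rw [tsub_add_cancel_of_le h1]
    push_cast
    ring_nf

lemma rMeasure_lintegral [MeasurableSpace X] [BorelSpace X]
    (hmono : ∀ f g : X →ᵇ ℝ≥0, (∀ x, f x ≤ g x) → Λ f ≤ Λ g)
    (f : X →ᵇ ℝ≥0) :
    ∫⁻ x, (f x : ℝ≥0∞) ∂(rCont Λ).measure = (Λ f : ℝ≥0∞) := by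
  set μ := (rCont Λ).measure with hμdef
  set c : ℝ≥0 := rieszContentAux Λ ⊤ with hcdef
  have hμuniv : μ univ ≤ (c : ℝ≥0∞) := by
    have h := rMeasure_compacts Λ (⊤ : Compacts X)
    rw [Compacts.coe_top] at h
    exact le_of_eq h
  have hclosed : ∀ t : ℝ≥0, IsClosed (kC f t : Set X) :=
    fun t => isClosed_Ici.preimage f.continuous
  have key : ∀ ε : ℝ≥0, 0 < ε →
      (Λ f : ℝ≥0∞) ≤ ∫⁻ x, (f x : ℝ≥0∞) ∂μ + ε * c ∧
      ∫⁻ x, (f x : ℝ≥0∞) ∂μ ≤ (Λ f : ℝ≥0∞) + ε * c := by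
    intro ε hε
    obtain ⟨N, hN⟩ := exists_nat_ge ((nndist 0 f) / ε)
    have hM : ∀ x, f x ≤ (N : ℝ≥0) * ε := by
      intro x
      calc f x ≤ nndist 0 f := f.apply_le_nndist_zero x
        _ = (nndist 0 f) / ε * ε := (div_mul_cancel₀ _ hε.ne').symm
        _ ≤ (N : ℝ≥0) * ε := mul_le_mul_left hN ε
    set g : ℕ → (X →ᵇ ℝ≥0) :=
      fun i => sliceFun f ((i : ℝ≥0) * ε) (((i : ℝ≥0) + 1) * ε) with hgdef
    have hse : ∀ i : ℕ, (i : ℝ≥0) * ε ≤ ((i : ℝ≥0) + 1) * ε :=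
      fun i => mul_le_mul_left le_self_add ε
    have hwidth : ∀ i : ℕ, ((i : ℝ≥0) + 1) * ε - (i : ℝ≥0) * ε = ε := by
      intro i; rw [add_mul, one_mul, add_tsub_cancel_left]
    have hptsum : ∀ x, f x = ∑ i ∈ Finset.range N, g i x := by
      intro x
      have := tele_nnreal (f x) ε N
      rw [min_eq_left (hM x)] at this
      rw [← this]
      rfl
    have hfsum : f = ∑ i ∈ Finset.range N, g i := by
      refine BoundedContinuousFunction.ext fun x => ?_
      rw [coe_sum, Finset.sum_apply]
      exact hptsum x
    have hLsum : Λ f = ∑ i ∈ Finset.range N, Λ (g i) := by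
      rw [hfsum, map_sum]
    have hIsum : ∫⁻ x, (f x : ℝ≥0∞) ∂μ
        = ∑ i ∈ Finset.range N, ∫⁻ x, (g i x : ℝ≥0∞) ∂μ := by
      rw [← lintegral_finset_sum _
        (fun i _ => (g i).continuous.measurable.coe_nnreal_ennreal)]
      congr 1
      funext x
      calc (f x : ℝ≥0∞) = ((∑ i ∈ Finset.range N, g i x : ℝ≥0) : ℝ≥0∞) := by
            exact congrArg (fun z : ℝ≥0 => (z : ℝ≥0∞)) (hptsum x)
        _ = ∑ i ∈ Finset.range N, (g i x : ℝ≥0∞) := by push_cast; rfl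
    set m : ℕ → ℝ≥0∞ := fun i => μ (kC f ((i : ℝ≥0) * ε) : Set X) with hmdef
    have hmK : ∀ i : ℕ,
        m i = ((rieszContentAux Λ (kC f ((i : ℝ≥0) * ε)) : ℝ≥0) : ℝ≥0∞) :=
      fun i => rMeasure_compacts Λ _
    have hcast : ∀ i : ℕ, ((i : ℝ≥0) + 1) = ((i + 1 : ℕ) : ℝ≥0) := by
      intro i; push_cast; ring
    -- upper bound for Λ (g i)
    have hLup : ∀ i : ℕ, Λ (g i) ≤ ε * rieszContentAux Λ (kC f ((i : ℝ≥0) * ε)) := by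
      intro i
      have h1 : ∀ y ∈ Λ '' {f' : X →ᵇ ℝ≥0 | ∀ x ∈ kC f ((i : ℝ≥0) * ε), 1 ≤ f' x},
          ε⁻¹ * Λ (g i) ≤ y := by
        rintro y ⟨f', hf', rfl⟩
        have hpt : ∀ x, g i x ≤ (ε • f') x := by
          intro x
          show g i x ≤ ε * f' x
          by_cases hx : (i : ℝ≥0) * ε ≤ f x
          · calc g i x ≤ ((i : ℝ≥0) + 1) * ε - (i : ℝ≥0) * ε := sliceFun_le f _ _ (hse i) x
              _ = ε := hwidth i
              _ = ε * 1 := (mul_one ε).symm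
              _ ≤ ε * f' x := mul_le_mul_right (hf' x hx) ε
          · rw [show g i x = 0 from sliceFun_of_le f _ _ x (le_of_not_ge hx) (hse i)]
            exact zero_le
        have h2 := hmono _ _ hpt
        rw [_root_.map_smul, smul_eq_mul] at h2
        calc ε⁻¹ * Λ (g i) ≤ ε⁻¹ * (ε * Λ f') := mul_le_mul_right h2 _
          _ = Λ f' := inv_mul_cancel_left₀ hε.ne' _
      have h2 : ε⁻¹ * Λ (g i) ≤ rieszContentAux Λ (kC f ((i : ℝ≥0) * ε)) :=
        le_csInf (rieszContentAux_image_nonempty Λ _) h1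
      calc Λ (g i) = ε * (ε⁻¹ * Λ (g i)) := (mul_inv_cancel_left₀ hε.ne' _).symm
        _ ≤ ε * rieszContentAux Λ (kC f ((i : ℝ≥0) * ε)) := mul_le_mul_right h2 _
    -- lower bound for Λ (g i)
    have hLlow : ∀ i : ℕ,
        ε * rieszContentAux Λ (kC f (((i : ℝ≥0) + 1) * ε)) ≤ Λ (g i) := by
      intro i
      have h1 : ∀ x ∈ kC f (((i : ℝ≥0) + 1) * ε), (1 : ℝ≥0) ≤ (ε⁻¹ • g i) x := by
        intro x hx
        show (1 : ℝ≥0) ≤ ε⁻¹ * g i x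
        rw [show g i x = ((i : ℝ≥0) + 1) * ε - (i : ℝ≥0) * ε from
          sliceFun_of_ge f _ _ x hx (hse i), hwidth i, inv_mul_cancel₀ hε.ne']
      have h2 := rieszContentAux_le Λ h1
      rw [_root_.map_smul, smul_eq_mul] at h2
      calc ε * rieszContentAux Λ (kC f (((i : ℝ≥0) + 1) * ε))
          ≤ ε * (ε⁻¹ * Λ (g i)) := mul_le_mul_right h2 ε
        _ = Λ (g i) := mul_inv_cancel_left₀ hε.ne' _
    -- integral bounds
    have hIup : ∀ i : ℕ, ∫⁻ x, (g i x : ℝ≥0∞) ∂μ ≤ (ε : ℝ≥0∞) * m i := by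
      intro i
      have hpt : ∀ x, (g i x : ℝ≥0∞)
          ≤ (kC f ((i : ℝ≥0) * ε) : Set X).indicator (fun _ => (ε : ℝ≥0∞)) x := by
        intro x
        by_cases hx : x ∈ (kC f ((i : ℝ≥0) * ε) : Set X)
        · rw [Set.indicator_of_mem hx]
          exact ENNReal.coe_le_coe.mpr ((sliceFun_le f _ _ (hse i) x).trans_eq (hwidth i))
        · rw [Set.indicator_of_notMem hx]
          have : g i x = 0 := sliceFun_of_le f _ _ x (le_of_not_ge hx) (hse i)
          simp [this]
      calc ∫⁻ x, (g i x : ℝ≥0∞) ∂μ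
          ≤ ∫⁻ x, (kC f ((i : ℝ≥0) * ε) : Set X).indicator (fun _ => (ε : ℝ≥0∞)) x ∂μ :=
            lintegral_mono hpt
        _ = (ε : ℝ≥0∞) * m i := lintegral_indicator_const ((hclosed _).measurableSet) _
    have hIlow : ∀ i : ℕ, (ε : ℝ≥0∞) * m (i + 1) ≤ ∫⁻ x, (g i x : ℝ≥0∞) ∂μ := by
      intro i
      have hpt : ∀ x, (kC f (((i : ℝ≥0) + 1) * ε) : Set X).indicator
          (fun _ => (ε : ℝ≥0∞)) x ≤ (g i x : ℝ≥0∞) := by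
        intro x
        by_cases hx : x ∈ (kC f (((i : ℝ≥0) + 1) * ε) : Set X)
        · rw [Set.indicator_of_mem hx]
          have : g i x = ε := by
            rw [show g i x = ((i : ℝ≥0) + 1) * ε - (i : ℝ≥0) * ε from
              sliceFun_of_ge f _ _ x hx (hse i), hwidth i]
          rw [this]
        · rw [Set.indicator_of_notMem hx]
          exact zero_le
      have hKeq : kC f (((i : ℝ≥0) + 1) * ε) = kC f (((i + 1 : ℕ) : ℝ≥0) * ε) := by
        rw [hcast i]
      calc (ε : ℝ≥0∞) * m (i + 1)
          = ∫⁻ x, (kC f (((i : ℝ≥0) + 1) * ε) : Set X).indicator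
              (fun _ => (ε : ℝ≥0∞)) x ∂μ := by
            rw [lintegral_indicator_const ((hclosed _).measurableSet), hKeq]
        _ ≤ ∫⁻ x, (g i x : ℝ≥0∞) ∂μ := lintegral_mono hpt
    -- shifting sums
    have hshift : ∀ h : ℕ → ℝ≥0∞,
        ∑ i ∈ Finset.range N, h i ≤ (∑ i ∈ Finset.range N, h (i + 1)) + h 0 := by
      intro h
      cases N with
      | zero => simp
      | succ n =>
        rw [Finset.sum_range_succ']
        exact add_le_add_left
          (Finset.sum_le_sum_of_subset (Finset.range_subset_range.mpr (Nat.le_succ n))) _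
    have hm0 : m 0 ≤ (c : ℝ≥0∞) := le_trans (measure_mono (subset_univ _)) hμuniv
    have hLm : ∀ i : ℕ, (Λ (g i) : ℝ≥0∞) ≤ (ε : ℝ≥0∞) * m i := by
      intro i
      rw [hmK i, ← ENNReal.coe_mul]
      exact_mod_cast hLup i
    have hmL : ∀ i : ℕ, (ε : ℝ≥0∞) * m (i + 1) ≤ (Λ (g i) : ℝ≥0∞) := by
      intro i
      rw [hmK (i + 1), ← ENNReal.coe_mul]
      have := hLlow i
      rw [hcast i] at this
      exact_mod_cast this
    constructor
    · calc (Λ f : ℝ≥0∞) = ∑ i ∈ Finset.range N, (Λ (g i) : ℝ≥0∞) := by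
            rw [hLsum]; push_cast; rfl
        _ ≤ ∑ i ∈ Finset.range N, (ε : ℝ≥0∞) * m i := Finset.sum_le_sum fun i _ => hLm i
        _ ≤ (∑ i ∈ Finset.range N, (ε : ℝ≥0∞) * m (i + 1)) + (ε : ℝ≥0∞) * m 0 :=
            hshift _
        _ ≤ (∑ i ∈ Finset.range N, ∫⁻ x, (g i x : ℝ≥0∞) ∂μ) + (ε : ℝ≥0∞) * c :=
            add_le_add (Finset.sum_le_sum fun i _ => hIlow i) (mul_le_mul_right hm0 _)
        _ = ∫⁻ x, (f x : ℝ≥0∞) ∂μ + (ε : ℝ≥0∞) * c := by rw [← hIsum]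
    · calc ∫⁻ x, (f x : ℝ≥0∞) ∂μ
          = ∑ i ∈ Finset.range N, ∫⁻ x, (g i x : ℝ≥0∞) ∂μ := hIsum
        _ ≤ ∑ i ∈ Finset.range N, (ε : ℝ≥0∞) * m i := Finset.sum_le_sum fun i _ => hIup i
        _ ≤ (∑ i ∈ Finset.range N, (ε : ℝ≥0∞) * m (i + 1)) + (ε : ℝ≥0∞) * m 0 :=
            hshift _
        _ ≤ (∑ i ∈ Finset.range N, (Λ (g i) : ℝ≥0∞)) + (ε : ℝ≥0∞) * c :=
            add_le_add (Finset.sum_le_sum fun i _ => hmL i) (mul_le_mul_right hm0 _)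
        _ = (Λ f : ℝ≥0∞) + (ε : ℝ≥0∞) * c := by
            rw [hLsum]; push_cast; rfl
  -- conclude
  have hfin : ∫⁻ x, (f x : ℝ≥0∞) ∂μ < ⊤ := by
    refine lt_of_le_of_lt ((key 1 one_pos).2) ?_
    exact ENNReal.add_lt_top.mpr ⟨ENNReal.coe_lt_top, by
      rw [← ENNReal.coe_mul]; exact ENNReal.coe_lt_top⟩
  have heps : ∀ η : ℝ≥0, 0 < η → ∃ ε : ℝ≥0, 0 < ε ∧ (ε : ℝ≥0∞) * c ≤ (η : ℝ≥0∞) := by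
    intro η hη
    refine ⟨η / (c + 1), ?_, ?_⟩
    · rw [← NNReal.coe_lt_coe]
      push_cast
      positivity
    · rw [← ENNReal.coe_mul]
      rw [ENNReal.coe_le_coe, ← NNReal.coe_le_coe]
      push_cast
      rw [div_mul_eq_mul_div, div_le_iff₀ (by positivity)]
      nlinarith [c.coe_nonneg, η.coe_nonneg]
  refine le_antisymm ?_ ?_
  · refine ENNReal.le_of_forall_pos_le_add fun η hη _ => ?_
    obtain ⟨ε, hε, hεc⟩ := heps η hη
    exact ((key ε hε).2).trans (add_le_add_right hεc _)
  · refine ENNReal.le_of_forall_pos_le_add fun η hη _ => ?_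
    obtain ⟨ε, hε, hεc⟩ := heps η hη
    exact ((key ε hε).1).trans (add_le_add_right hεc _)

end Riesz

section MaxMeasure

lemma integral_le_norm_bcf (g : C(X, ℝ)) (p : ProbabilityMeasure X) :
    |∫ x, g x ∂(p : Measure X)| ≤ ‖mkOfCompact g‖ := by
  have h := BoundedContinuousFunction.norm_integral_le_norm (μ := (p : Measure X))
    (mkOfCompact g)
  simpa [Real.norm_eq_abs] using h

lemma integrable_cm (g : C(X, ℝ)) (p : ProbabilityMeasure X) :
    Integrable (fun x => g x) (p : Measure X) := by
  exact (mkOfCompact g).integrable (p : Measure X)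

theorem exists_max_invariant (T : X → X) (hT : Continuous T)
    (hne : (InvMeas T).Nonempty) (φ : C(X, ℝ)) :
    ∃ μ ∈ InvMeas T, ∀ ν ∈ InvMeas T,
      ∫ x, φ x ∂(ν : Measure X) ≤ ∫ x, φ x ∂(μ : Measure X) := by
  classical
  set S : Set ℝ := (fun μ : ProbabilityMeasure X => ∫ x, φ x ∂(μ : Measure X)) '' InvMeas T
    with hSdef
  have hSne : S.Nonempty := hne.image _
  have hSbdd : BddAbove S := by
    refine ⟨‖mkOfCompact φ‖, ?_⟩
    rintro y ⟨p, hp, rfl⟩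
    exact (le_abs_self _).trans (integral_le_norm_bcf φ p)
  set A : ℝ := sSup S with hAdef
  -- a maximizing sequence
  have hseq : ∀ n : ℕ, ∃ p : ProbabilityMeasure X,
      p ∈ InvMeas T ∧ A - 1 / (n + 1) < ∫ x, φ x ∂(p : Measure X) := by
    intro n
    have hlt : A - 1 / (n + 1 : ℝ) < A := by
      have : (0:ℝ) < 1 / (n + 1 : ℝ) := by positivity
      linarith
    obtain ⟨y, ⟨p, hp, rfl⟩, hy⟩ := exists_lt_of_lt_csSup hSne hlt
    exact ⟨p, hp, hy⟩
  choose σ hσmem hσlt using hseq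
  have htend : Tendsto (fun n => ∫ x, φ x ∂(σ n : Measure X)) atTop (nhds A) := by
    have h1 : Tendsto (fun n : ℕ => A - 1 / (n + 1 : ℝ)) atTop (nhds A) := by
      have := tendsto_one_div_add_atTop_nhds_zero_nat (𝕜 := ℝ)
      have h2 := (tendsto_const_nhds (x := A) (f := atTop (α := ℕ))).sub this
      simpa using h2
    refine tendsto_of_tendsto_of_tendsto_of_le_of_le h1 tendsto_const_nhds ?_ ?_
    · exact fun n => le_of_lt (hσlt n)
    · exact fun n => le_csSup hSbdd ⟨σ n, hσmem n, rfl⟩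
  set U : Ultrafilter ℕ := Ultrafilter.of atTop with hUdef
  have hU : (U : Filter ℕ) ≤ atTop := Ultrafilter.of_le _
  -- limit functional on C(X, ℝ)
  have hLex : ∀ g : C(X, ℝ), ∃ r : ℝ,
      Tendsto (fun n => ∫ x, g x ∂(σ n : Measure X)) U (nhds r) := by
    intro g
    have hmem : ∀ n, (∫ x, g x ∂(σ n : Measure X)) ∈
        Icc (-‖mkOfCompact g‖) ‖mkOfCompact g‖ := by
      intro n
      exact abs_le.mp (integral_le_norm_bcf g (σ n))
    obtain ⟨r, _, hr⟩ := (isCompact_Icc (a := -‖mkOfCompact g‖) (b := ‖mkOfCompact g‖)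
      ).ultrafilter_le_nhds (U.map fun n => ∫ x, g x ∂(σ n : Measure X))
      (by
        refine le_principal_iff.mpr ?_
        rw [Ultrafilter.coe_map, Filter.mem_map]
        exact Filter.Eventually.of_forall hmem)
    exact ⟨r, hr⟩
  choose L hL using hLex
  have hadd : ∀ g₁ g₂ : C(X, ℝ), L (g₁ + g₂) = L g₁ + L g₂ := by
    intro g₁ g₂
    refine tendsto_nhds_unique (hL (g₁ + g₂)) ?_
    have heq : (fun n => ∫ x, (g₁ + g₂) x ∂(σ n : Measure X))
        = fun n => (∫ x, g₁ x ∂(σ n : Measure X)) + ∫ x, g₂ x ∂(σ n : Measure X) := by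
      funext n
      simpa using integral_add (integrable_cm g₁ (σ n)) (integrable_cm g₂ (σ n))
    rw [heq]
    exact (hL g₁).add (hL g₂)
  have hsmul : ∀ (c : ℝ) (g : C(X, ℝ)), L (c • g) = c * L g := by
    intro c g
    refine tendsto_nhds_unique (hL (c • g)) ?_
    have heq : (fun n => ∫ x, (c • g) x ∂(σ n : Measure X))
        = fun n => c * ∫ x, g x ∂(σ n : Measure X) := by
      funext n
      simpa using integral_smul c (fun x => g x)
    rw [heq]
    exact (hL g).const_mul c
  have hlmono : ∀ g₁ g₂ : C(X, ℝ), (∀ x, g₁ x ≤ g₂ x) → L g₁ ≤ L g₂ := by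
    intro g₁ g₂ hle
    refine le_of_tendsto_of_tendsto (hL g₁) (hL g₂) ?_
    refine Filter.Eventually.of_forall fun n => ?_
    exact integral_mono (integrable_cm g₁ (σ n)) (integrable_cm g₂ (σ n)) hle
  have hone : L 1 = 1 := by
    refine tendsto_nhds_unique (hL 1) ?_
    have heq : (fun n => ∫ x, (1 : C(X, ℝ)) x ∂(σ n : Measure X)) = fun _ => (1:ℝ) := by
      funext n
      simp
    rw [heq]
    exact tendsto_const_nhds
  have hzero : L 0 = 0 := by
    refine tendsto_nhds_unique (hL 0) ?_
    have heq : (fun n => ∫ x, (0 : C(X, ℝ)) x ∂(σ n : Measure X)) = fun _ => (0:ℝ) := by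
      funext n
      simp
    rw [heq]
    exact tendsto_const_nhds
  have hpos : ∀ g : C(X, ℝ), (∀ x, 0 ≤ g x) → 0 ≤ L g := by
    intro g hg
    rw [← hzero]
    exact hlmono 0 g (by simpa using hg)
  have hcomp : ∀ g : C(X, ℝ), L (g.comp ⟨T, hT⟩) = L g := by
    intro g
    refine tendsto_nhds_unique (hL (g.comp ⟨T, hT⟩)) ?_
    have heq : (fun n => ∫ x, (g.comp ⟨T, hT⟩) x ∂(σ n : Measure X))
        = fun n => ∫ x, g x ∂(σ n : Measure X) := by
      funext n
      have hinv : ((σ n : Measure X)).map T = (σ n : Measure X) := hσmem n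
      conv_rhs => rw [← hinv]
      rw [integral_map hT.aemeasurable g.continuous.aestronglyMeasurable]
      rfl
    rw [heq]
    exact hL g
  have hφA : L φ = A := tendsto_nhds_unique (hL φ) (htend.mono_left hU)
  -- move to nonnegative functions
  set fR : (X →ᵇ ℝ≥0) → C(X, ℝ) :=
    fun f => ⟨fun x => (f x : ℝ), NNReal.continuous_coe.comp f.continuous⟩ with hfRdef
  have hfR_nonneg : ∀ (f : X →ᵇ ℝ≥0) (x : X), 0 ≤ fR f x := fun f x => (f x).coe_nonneg
  have hLnn : ∀ f : X →ᵇ ℝ≥0, 0 ≤ L (fR f) := fun f => hpos _ (hfR_nonneg f)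
  set Λ₀ : (X →ᵇ ℝ≥0) → ℝ≥0 := fun f => (L (fR f)).toNNReal with hΛ₀def
  have hΛ₀coe : ∀ f : X →ᵇ ℝ≥0, ((Λ₀ f : ℝ≥0) : ℝ) = L (fR f) := by
    intro f
    exact Real.coe_toNNReal _ (hLnn f)
  have hΛadd : ∀ f g : X →ᵇ ℝ≥0, Λ₀ (f + g) = Λ₀ f + Λ₀ g := by
    intro f g
    have h1 : fR (f + g) = fR f + fR g := by
      ext x
      push_cast
      rfl
    rw [← NNReal.coe_inj]
    push_cast
    rw [hΛ₀coe, hΛ₀coe, hΛ₀coe, h1, hadd]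
  have hΛsmul : ∀ (c : ℝ≥0) (f : X →ᵇ ℝ≥0), Λ₀ (c • f) = c * Λ₀ f := by
    intro c f
    have h1 : fR (c • f) = (c : ℝ) • fR f := by
      ext x
      show ((c • f) x : ℝ) = (c : ℝ) * (f x : ℝ)
      push_cast
      rfl
    rw [← NNReal.coe_inj]
    push_cast
    rw [hΛ₀coe, hΛ₀coe, h1, hsmul]
  set Λ : (X →ᵇ ℝ≥0) →ₗ[ℝ≥0] ℝ≥0 :=
    { toFun := Λ₀
      map_add' := hΛadd
      map_smul' := fun c f => by simpa [smul_eq_mul] using hΛsmul c f } with hΛdef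
  have hmono : ∀ f g : X →ᵇ ℝ≥0, (∀ x, f x ≤ g x) → Λ f ≤ Λ g := by
    intro f g hle
    show Λ₀ f ≤ Λ₀ g
    rw [← NNReal.coe_le_coe, hΛ₀coe, hΛ₀coe]
    exact hlmono _ _ fun x => by exact_mod_cast hle x
  -- the limit measure
  set m : Measure X := (rCont Λ).measure with hmdef
  have hΛone : Λ 1 = 1 := by
    show Λ₀ 1 = 1
    have h1 : fR (1 : X →ᵇ ℝ≥0) = 1 := by
      ext x
      show ((1 : X →ᵇ ℝ≥0) x : ℝ) = 1
      simp
    rw [← NNReal.coe_inj, hΛ₀coe, h1, hone]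
    simp
  have hprob : IsProbabilityMeasure m := by
    constructor
    have h1 := rMeasure_compacts Λ (⊤ : Compacts X)
    rw [Compacts.coe_top] at h1
    rw [hmdef, h1, rc_top Λ hmono, hΛone]
    simp
  have hrep : ∀ f : X →ᵇ ℝ≥0, ∫⁻ x, (f x : ℝ≥0∞) ∂m = (Λ f : ℝ≥0∞) :=
    rMeasure_lintegral Λ hmono
  -- real representation
  have hrealnn : ∀ g : C(X, ℝ), (∀ x, 0 ≤ g x) → ∫ x, g x ∂m = L g := by
    intro g hg
    set f : X →ᵇ ℝ≥0 := mkOfCompact ⟨fun x => (g x).toNNReal,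
      continuous_real_toNNReal.comp g.continuous⟩ with hfdef
    have hfg : fR f = g := by
      ext x
      exact Real.coe_toNNReal _ (hg x)
    have h1 : ∫ x, g x ∂m = (∫⁻ x, ENNReal.ofReal (g x) ∂m).toReal := by
      exact integral_eq_lintegral_of_nonneg_ae (Filter.Eventually.of_forall hg)
        g.continuous.aestronglyMeasurable
    have h2 : (fun x => ENNReal.ofReal (g x)) = fun x => ((f x : ℝ≥0) : ℝ≥0∞) := by
      funext x
      rfl
    rw [h1, h2, hrep f, ENNReal.coe_toReal, ← hfg]
    exact hΛ₀coe f
  have hreal : ∀ g : C(X, ℝ), ∫ x, g x ∂m = L g := by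
    intro g
    set cst : ℝ := ‖mkOfCompact g‖ with hcstdef
    have hb : ∀ x, |g x| ≤ cst := by
      intro x
      have := (mkOfCompact g).norm_coe_le_norm x
      simpa [Real.norm_eq_abs, hcstdef] using this
    have hcg : ∀ x, 0 ≤ (g + cst • (1 : C(X, ℝ))) x := by
      intro x
      have h1 := (abs_le.mp (hb x)).1
      simp only [ContinuousMap.add_apply, ContinuousMap.smul_apply, ContinuousMap.one_apply,
        smul_eq_mul, mul_one]
      linarith
    haveI := hprob
    have h1 := hrealnn (g + cst • 1) hcg
    have h2 : ∫ x, (g + cst • (1 : C(X, ℝ))) x ∂m = (∫ x, g x ∂m) + cst := by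
      have heq : (fun x => (g + cst • (1 : C(X, ℝ))) x) = fun x => g x + cst := by
        funext x
        simp
      have hig : Integrable (fun x => g x) m := by
        exact (mkOfCompact g).integrable (μ := m)
      rw [heq, integral_add hig (integrable_const cst)]
      simp [measure_univ]
    have h3 : L (g + cst • 1) = L g + cst := by
      rw [hadd, hsmul, hone, mul_one]
    rw [h2, h3] at h1
    linarith
  -- the limit probability measure is invariant and maximizing
  set P : ProbabilityMeasure X := ⟨m, hprob⟩ with hPdef
  have hPcoe : (P : Measure X) = m := rfl
  have hPinv : P ∈ InvMeas T := by
    show (P : Measure X).map T = (P : Measure X)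
    rw [hPcoe]
    haveI : IsProbabilityMeasure (m.map T) := Measure.isProbabilityMeasure_map hT.aemeasurable
    refine ext_of_forall_lintegral_eq_of_IsFiniteMeasure ?_
    intro f
    rw [lintegral_map f.continuous.measurable.coe_nnreal_ennreal hT.measurable]
    have h2 : Λ (f.compContinuous ⟨T, hT⟩) = Λ f := by
      show Λ₀ _ = Λ₀ _
      rw [← NNReal.coe_inj, hΛ₀coe, hΛ₀coe]
      have heq : fR (f.compContinuous ⟨T, hT⟩) = (fR f).comp ⟨T, hT⟩ := rfl
      rw [heq, hcomp]
    calc ∫⁻ x, ((f (T x) : ℝ≥0) : ℝ≥0∞) ∂m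
        = (Λ (f.compContinuous ⟨T, hT⟩) : ℝ≥0∞) := by exact hrep (f.compContinuous ⟨T, hT⟩)
      _ = (Λ f : ℝ≥0∞) := by rw [h2]
      _ = ∫⁻ x, ((f x : ℝ≥0) : ℝ≥0∞) ∂m := (hrep f).symm
  refine ⟨P, hPinv, ?_⟩
  intro ν hν
  have h3 : ∫ x, φ x ∂(P : Measure X) = A := by rw [hPcoe, hreal φ, hφA]
  rw [h3]
  exact le_csSup hSbdd ⟨ν, hν, rfl⟩

end MaxMeasure

end Frz

theorem stmt9
    (T : X → X) (hT : Continuous T) (hne : (InvMeas T).Nonempty)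
    (h : ProbabilityMeasure X → ℝ)
    (hbd : ∃ C : ℝ, ∀ μ ∈ InvMeas T, |h μ| ≤ C)
    (haff : ∀ μ ν : ProbabilityMeasure X, μ ∈ InvMeas T → ν ∈ InvMeas T →
      ∀ t : ℝ, 0 ≤ t → t ≤ 1 → ∀ σ : ProbabilityMeasure X,
        (σ : Measure X) =
          ENNReal.ofReal t • (μ : Measure X) + ENNReal.ofReal (1 - t) • (ν : Measure X) →
        h σ = t * h μ + (1 - t) * h ν)
    (φ : C(X, ℝ)) (β₀ : ℝ) (hβ₀ : 0 < β₀) :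
    (∃ μ : ProbabilityMeasure X, ∀ β : ℝ, β₀ ≤ β → IsEquilib T h (β • φ) μ) ↔
      (press T h (β₀ • φ) = β₀ * MaxInt T φ + hInfty T h φ ∧
        ∃ β : ℝ, β₀ < β ∧ ∃ ν : ProbabilityMeasure X, IsEquilib T h (β • φ) ν) := by
  classical
  obtain ⟨C, hC⟩ := hbd
  set ints : ProbabilityMeasure X → ℝ := fun μ => ∫ x, φ x ∂(μ : Measure X) with hintsdef
  have hsint : ∀ (β : ℝ) (p : ProbabilityMeasure X),
      ∫ x, (β • φ) x ∂(p : Measure X) = β * ints p := by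
    intro β p
    simp only [ContinuousMap.smul_apply, smul_eq_mul]
    simpa using integral_smul β (fun x => φ x)
  have hintle : ∀ p : ProbabilityMeasure X,
      |ints p| ≤ ‖BoundedContinuousFunction.mkOfCompact φ‖ :=
    fun p => Frz.integral_le_norm_bcf φ p
  set nφ : ℝ := ‖BoundedContinuousFunction.mkOfCompact φ‖ with hnφdef
  -- basic press lemmas
  have hPbdd : ∀ β : ℝ, BddAbove
      ((fun μ : ProbabilityMeasure X => h μ + ∫ x, (β • φ) x ∂(μ : Measure X)) '' InvMeas T) := by
    intro β
    refine ⟨C + |β| * nφ, ?_⟩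
    rintro y ⟨p, hp, rfl⟩
    have h1 : h p ≤ C := (le_abs_self _).trans (hC p hp)
    have h2 : β * ints p ≤ |β| * nφ := by
      calc β * ints p ≤ |β * ints p| := le_abs_self _
        _ = |β| * |ints p| := abs_mul _ _
        _ ≤ |β| * nφ := mul_le_mul_of_nonneg_left (hintle p) (abs_nonneg β)
    show h p + ∫ x, (β • φ) x ∂(p : Measure X) ≤ C + |β| * nφ
    rw [hsint]
    linarith
  have hle_press : ∀ (β : ℝ) (p : ProbabilityMeasure X), p ∈ InvMeas T →
      h p + β * ints p ≤ press T h (β • φ) := by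
    intro β p hp
    refine le_csSup (hPbdd β) ⟨p, hp, ?_⟩
    show h p + ∫ x, (β • φ) x ∂(p : Measure X) = h p + β * ints p
    rw [hsint]
  have hpress_le : ∀ (β : ℝ) (b : ℝ),
      (∀ p ∈ InvMeas T, h p + β * ints p ≤ b) → press T h (β • φ) ≤ b := by
    intro β b hb
    refine csSup_le (hne.image _) ?_
    rintro y ⟨p, hp, rfl⟩
    show h p + ∫ x, (β • φ) x ∂(p : Measure X) ≤ b
    rw [hsint]
    exact hb p hp
  -- MaxInt lemmas
  have hMbdd : BddAbove (ints '' InvMeas T) := by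
    refine ⟨nφ, ?_⟩
    rintro y ⟨p, hp, rfl⟩
    exact (le_abs_self _).trans (hintle p)
  have hints_le_Max : ∀ p ∈ InvMeas T, ints p ≤ MaxInt T φ :=
    fun p hp => le_csSup hMbdd ⟨p, hp, rfl⟩
  -- the maximizing measure
  obtain ⟨μs, hμsinv, hμsmax⟩ := Frz.exists_max_invariant T hT hne φ
  have hμsMax : ints μs = MaxInt T φ := by
    refine le_antisymm (hints_le_Max μs hμsinv) ?_
    refine csSup_le (hne.image _) ?_
    rintro y ⟨p, hp, rfl⟩
    exact hμsmax p hp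
  have hμsS : μs ∈ {μ ∈ InvMeas T | ints μ = MaxInt T φ} := ⟨hμsinv, hμsMax⟩
  have hSbddh : BddAbove (h '' {μ ∈ InvMeas T | ints μ = MaxInt T φ}) := by
    refine ⟨C, ?_⟩
    rintro y ⟨p, ⟨hpI, _⟩, rfl⟩
    exact (le_abs_self _).trans (hC p hpI)
  have hSneh : (h '' {μ ∈ InvMeas T | ints μ = MaxInt T φ}).Nonempty := ⟨h μs, μs, hμsS, rfl⟩
  have hhinf_ge : ∀ ρ ∈ InvMeas T, ints ρ = MaxInt T φ → h ρ ≤ hInfty T h φ :=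
    fun ρ hρ hρM => le_csSup hSbddh ⟨ρ, ⟨hρ, hρM⟩, rfl⟩
  constructor
  · -- forward direction
    rintro ⟨μ, hμ⟩
    have hμinv : μ ∈ InvMeas T := (hμ β₀ le_rfl).1
    have hdom : ∀ p ∈ InvMeas T, ∀ β : ℝ, β₀ ≤ β →
        h p + β * ints p ≤ h μ + β * ints μ := by
      intro p hp β hβ
      have h1 := hle_press β p hp
      have h2 := (hμ β hβ).2
      rw [hsint] at h2
      linarith [h1.trans_eq h2.symm]
    have hmax : ∀ p ∈ InvMeas T, ints p ≤ ints μ := by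
      intro p hp
      by_contra hlt
      push_neg at hlt
      set d : ℝ := ints p - ints μ with hddef
      have hd : 0 < d := sub_pos.mpr hlt
      set β : ℝ := max β₀ ((h μ - h p + 1) / d) with hβdef
      have hβ : β₀ ≤ β := le_max_left _ _
      have h1 := hdom p hp β hβ
      have h2 : (h μ - h p + 1) / d ≤ β := le_max_right _ _
      rw [div_le_iff₀ hd] at h2
      nlinarith
    have hμMax : ints μ = MaxInt T φ := by
      refine le_antisymm (hints_le_Max μ hμinv) ?_
      refine csSup_le (hne.image _) ?_
      rintro y ⟨p, hp, rfl⟩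
      exact hmax p hp
    have hinf_eq : hInfty T h φ = h μ := by
      refine le_antisymm ?_ (le_csSup hSbddh ⟨μ, ⟨hμinv, hμMax⟩, rfl⟩)
      refine csSup_le hSneh ?_
      rintro y ⟨p, ⟨hpI, hpM⟩, rfl⟩
      have h1 := hdom p hpI β₀ le_rfl
      have hpM' : ints p = ints μ := hpM.trans hμMax.symm
      rw [hpM'] at h1
      linarith
    refine ⟨?_, β₀ + 1, by linarith, μ, hμ (β₀ + 1) (by linarith)⟩
    have h1 := (hμ β₀ le_rfl).2
    rw [hsint] at h1
    rw [← h1, hμMax, hinf_eq]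
    ring
  · -- backward direction
    rintro ⟨hP0, β₁, hβ₁, ν, hνinv, hνeq⟩
    rw [hsint] at hνeq
    set Mx : ℝ := MaxInt T φ with hMxdef
    set hI : ℝ := hInfty T h φ with hIdef
    have hup : ∀ β : ℝ, β₀ ≤ β → press T h (β • φ) ≤ β * Mx + hI := by
      intro β hβ
      refine hpress_le β _ ?_
      intro p hp
      have h1 : h p + β₀ * ints p ≤ β₀ * Mx + hI := (hle_press β₀ p hp).trans_eq hP0
      have h2 : ints p ≤ Mx := hints_le_Max p hp
      nlinarith [mul_nonneg (sub_nonneg.mpr hβ) (sub_nonneg.mpr h2)]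
    have hlow : ∀ β : ℝ, β * Mx + hI ≤ press T h (β • φ) := by
      intro β
      have h1 : hI ≤ press T h (β • φ) - β * Mx := by
        refine csSup_le hSneh ?_
        rintro y ⟨p, ⟨hpI, hpM⟩, rfl⟩
        have h2 := hle_press β p hpI
        have hpM' : ints p = Mx := hpM
        rw [hpM'] at h2
        linarith
      linarith
    have hpeq : ∀ β : ℝ, β₀ ≤ β → press T h (β • φ) = β * Mx + hI :=
      fun β hβ => le_antisymm (hup β hβ) (hlow β)
    have hν1 : h ν + β₁ * ints ν = β₁ * Mx + hI := hνeq.trans (hpeq β₁ hβ₁.le)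
    have hν0 : h ν + β₀ * ints ν ≤ β₀ * Mx + hI := (hle_press β₀ ν hνinv).trans_eq hP0
    have hνM : ints ν = Mx := by
      refine le_antisymm (hints_le_Max ν hνinv) ?_
      by_contra hlt
      push_neg at hlt
      have h4 : 0 ≤ (β₁ - β₀) * (ints ν - Mx) := by nlinarith
      have h5 : (β₁ - β₀) * (ints ν - Mx) < 0 :=
        mul_neg_of_pos_of_neg (by linarith) (by linarith)
      linarith
    have hνh : h ν = hI := by
      rw [hνM] at hν1
      linarith
    refine ⟨ν, fun β hβ => ⟨hνinv, ?_⟩⟩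
    rw [hsint, hνM, hνh, hpeq β hβ]
    ring
end

section
/- Let φ ∈ C(X) and β₀ > 0. Suppose φ freezes at inverse temperature β₀ (there exists μ ∈ M_T(X) that is an equilibrium state for βφ for all β ≥ β₀), but for every α with 0 < α < β₀, φ does not freeze at inverse temperature α. Then the function P_φ : β ↦ P(βφ) is not real-analytic at β₀. -/
open MeasureTheory Filter Set
open scoped NNReal ENNReal

variable {X : Type*} [MetricSpace X] [CompactSpace X] [Nonempty X]
  [MeasurableSpace X] [BorelSpace X]

theorem stmt10
    (T : X → X) (hT : Continuous T) (hne : (InvMeas T).Nonempty)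
    (h : ProbabilityMeasure X → ℝ)
    (hbd : ∃ C : ℝ, ∀ μ ∈ InvMeas T, |h μ| ≤ C)
    (haff : ∀ μ ν : ProbabilityMeasure X, μ ∈ InvMeas T → ν ∈ InvMeas T →
      ∀ t : ℝ, 0 ≤ t → t ≤ 1 → ∀ σ : ProbabilityMeasure X,
        (σ : Measure X) =
          ENNReal.ofReal t • (μ : Measure X) + ENNReal.ofReal (1 - t) • (ν : Measure X) →
        h σ = t * h μ + (1 - t) * h ν)
    (φ : C(X, ℝ)) (β₀ : ℝ) (hβ₀ : 0 < β₀)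
    (hfreeze : ∃ μ : ProbabilityMeasure X, ∀ β : ℝ, β₀ ≤ β → IsEquilib T h (β • φ) μ)
    (hmin : ∀ α : ℝ, 0 < α → α < β₀ →
      ¬ ∃ μ : ProbabilityMeasure X, ∀ β : ℝ, α ≤ β → IsEquilib T h (β • φ) μ) :
    ¬ AnalyticAt ℝ (fun β : ℝ => press T h (β • φ)) β₀ := by
  intro hA
  obtain ⟨μ, hμ⟩ := hfreeze
  have hμinv : μ ∈ InvMeas T := (hμ β₀ le_rfl).1
  set c : ℝ := ∫ x, φ x ∂(μ : Measure X) with hc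
  -- integral of β • φ
  have hint : ∀ (β : ℝ) (ν : ProbabilityMeasure X),
      ∫ x, (β • φ) x ∂(ν : Measure X) = β * ∫ x, φ x ∂(ν : Measure X) := by
    intro β ν
    simp only [ContinuousMap.smul_apply, smul_eq_mul]
    exact integral_const_mul β _
  -- lower bound for pressure
  have hle : ∀ β : ℝ, h μ + β * c ≤ press T h (β • φ) := by
    intro β
    obtain ⟨C, hC⟩ := hbd
    have hBdd : BddAbove ((fun ν : ProbabilityMeasure X =>
        h ν + ∫ x, (β • φ) x ∂(ν : Measure X)) '' InvMeas T) := by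
      refine ⟨C + ‖β • φ‖, ?_⟩
      rintro y ⟨ν, hν, rfl⟩
      show h ν + ∫ x, (β • φ) x ∂(ν : Measure X) ≤ C + ‖β • φ‖
      have h1 : |h ν| ≤ C := hC ν hν
      have h2 : ‖∫ x, (β • φ) x ∂(ν : Measure X)‖ ≤ ‖β • φ‖ * ((ν : Measure X) univ).toReal := by
        apply norm_integral_le_of_norm_le_const
        filter_upwards with x
        exact (β • φ).norm_coe_le_norm x
      have h3 : ((ν : Measure X) univ).toReal = 1 := by simp
      rw [h3, mul_one] at h2
      have h2' : |∫ x, (β • φ) x ∂(ν : Measure X)| ≤ ‖β • φ‖ := by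
        simpa [Real.norm_eq_abs] using h2
      linarith [(abs_le.mp h1).2, (abs_le.mp h2').2]
    have hmem : h μ + β * c ∈ (fun ν : ProbabilityMeasure X =>
        h ν + ∫ x, (β • φ) x ∂(ν : Measure X)) '' InvMeas T := by
      refine ⟨μ, hμinv, ?_⟩
      show h μ + ∫ x, (β • φ) x ∂(μ : Measure X) = h μ + β * c
      rw [hint β μ, hc]
    exact le_csSup hBdd hmem
  -- pressure equals affine function for β ≥ β₀
  have heq : ∀ β : ℝ, β₀ ≤ β → press T h (β • φ) = h μ + β * c := by
    intro β hβ
    have := (hμ β hβ).2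
    rw [hint β μ] at this
    exact this.symm
  -- the difference function
  set g : ℝ → ℝ := fun β => press T h (β • φ) - (h μ + β * c) with hg
  have hgA : AnalyticAt ℝ g β₀ := by
    apply hA.sub
    exact analyticAt_const.add (analyticAt_id.mul analyticAt_const)
  have hright : ∀ᶠ β in nhdsWithin β₀ (Set.Ioi β₀), g β = 0 := by
    filter_upwards [self_mem_nhdsWithin] with β hβ
    simp only [hg, heq β (le_of_lt hβ), sub_self]
  rcases hgA.eventually_eq_zero_or_eventually_ne_zero with hcase | hcase
  · -- g vanishes near β₀ : contradict hmin
    obtain ⟨ε, hε, hball⟩ := Metric.eventually_nhds_iff.mp hcase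
    set α : ℝ := max (β₀ - ε / 2) (β₀ / 2) with hα
    have hα0 : 0 < α := lt_of_lt_of_le (by linarith) (le_max_right _ _)
    have hαβ : α < β₀ := max_lt (by linarith) (by linarith)
    refine hmin α hα0 hαβ ⟨μ, fun β hβ => ?_⟩
    rcases le_or_gt β₀ β with hcase2 | hcase2
    · exact hμ β hcase2
    · have hdist : dist β β₀ < ε := by
        rw [Real.dist_eq, abs_lt]
        constructor
        · have : β₀ - ε / 2 ≤ α := le_max_left _ _
          linarith
        · linarith
      have := hball hdist
      have hpress : press T h (β • φ) = h μ + β * c := by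
        simpa [hg, sub_eq_zero] using this
      exact ⟨hμinv, by rw [hint β μ, ← hc, hpress]⟩
  · -- g nonzero near β₀ (punctured) : contradicts g = 0 on the right
    have h1 : ∀ᶠ β in nhdsWithin β₀ (Set.Ioi β₀), g β ≠ 0 :=
      nhdsWithin_mono β₀ (fun x hx => ne_of_gt hx) hcase
    have h2 : ∀ᶠ β in nhdsWithin β₀ (Set.Ioi β₀), False := by
      filter_upwards [h1, hright] with β hβ1 hβ2
      exact hβ1 hβ2
    obtain ⟨β, hf⟩ := h2.exists
    exact hf
end

section
/- Assume additionally that h(ν) ≥ 0 for all ν ∈ M_T(X). Let φ ∈ C(X) and let μ ∈ M_T(X) be an ergodic equilibrium state for φ with h(μ) = 0. Then for every β ≥ 1, μ is an equilibrium state for βφ. -/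
open MeasureTheory Filter Set
open scoped NNReal ENNReal

variable {X : Type*} [MetricSpace X] [CompactSpace X] [Nonempty X]
  [MeasurableSpace X] [BorelSpace X]

set_option linter.unusedSectionVars false in
lemma integral_abs_le_norm (φ : C(X, ℝ)) (ν : ProbabilityMeasure X) :
    |∫ x, φ x ∂(ν : Measure X)| ≤ ‖φ‖ := by
  have := norm_integral_le_of_norm_le_const (μ := (ν : Measure X)) (C := ‖φ‖)
    (f := fun x => φ x) (Filter.Eventually.of_forall fun x => φ.norm_coe_le_norm x)
  simpa using this

theorem stmt11
    (T : X → X) (hT : Continuous T) (hne : (InvMeas T).Nonempty)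
    (h : ProbabilityMeasure X → ℝ)
    (hbd : ∃ C : ℝ, ∀ μ ∈ InvMeas T, |h μ| ≤ C)
    (haff : ∀ μ ν : ProbabilityMeasure X, μ ∈ InvMeas T → ν ∈ InvMeas T →
      ∀ t : ℝ, 0 ≤ t → t ≤ 1 → ∀ σ : ProbabilityMeasure X,
        (σ : Measure X) =
          ENNReal.ofReal t • (μ : Measure X) + ENNReal.ofReal (1 - t) • (ν : Measure X) →
        h σ = t * h μ + (1 - t) * h ν)
    (hnn : ∀ ν ∈ InvMeas T, 0 ≤ h ν)
    (φ : C(X, ℝ)) (μ : ProbabilityMeasure X) (herg : Ergodic T (μ : Measure X))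
    (heq : IsEquilib T h φ μ) (hzero : h μ = 0) :
    ∀ β : ℝ, 1 ≤ β → IsEquilib T h (β • φ) μ := by
  obtain ⟨C, hC⟩ := hbd
  intro β hβ
  have hμinv := heq.1
  have hpress : press T h φ = ∫ x, φ x ∂(μ : Measure X) := by
    rw [← heq.2, hzero, zero_add]
  -- key: for any invariant ν, h ν + ∫φ dν ≤ ∫φ dμ
  have key : ∀ ν ∈ InvMeas T,
      h ν + ∫ x, φ x ∂(ν : Measure X) ≤ ∫ x, φ x ∂(μ : Measure X) := by
    intro ν hν
    rw [← hpress]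
    apply le_csSup
    · refine ⟨C + ‖φ‖, ?_⟩
      rintro y ⟨σ, hσ, rfl⟩
      exact add_le_add ((abs_le.mp (hC σ hσ)).2) ((abs_le.mp (integral_abs_le_norm φ σ)).2)
    · exact ⟨ν, hν, rfl⟩
  have hint : ∀ ν ∈ InvMeas T,
      ∫ x, φ x ∂(ν : Measure X) ≤ ∫ x, φ x ∂(μ : Measure X) := fun ν hν =>
    le_trans (le_add_of_nonneg_left (hnn ν hν)) (key ν hν)
  have hsmul : ∀ ν : ProbabilityMeasure X,
      ∫ x, (β • φ) x ∂(ν : Measure X) = β * ∫ x, φ x ∂(ν : Measure X) := by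
    intro ν
    simp only [ContinuousMap.smul_apply, smul_eq_mul]
    exact integral_const_mul β _
  have bound : ∀ ν ∈ InvMeas T,
      h ν + ∫ x, (β • φ) x ∂(ν : Measure X) ≤ β * ∫ x, φ x ∂(μ : Measure X) := by
    intro ν hν
    rw [hsmul]
    have h1 : h ν + β * ∫ x, φ x ∂(ν : Measure X)
        = (h ν + ∫ x, φ x ∂(ν : Measure X)) + (β - 1) * ∫ x, φ x ∂(ν : Measure X) := by
      ring
    have h2 : (β - 1) * ∫ x, φ x ∂(ν : Measure X)
        ≤ (β - 1) * ∫ x, φ x ∂(μ : Measure X) :=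
      mul_le_mul_of_nonneg_left (hint ν hν) (by linarith)
    calc h ν + β * ∫ x, φ x ∂(ν : Measure X)
        ≤ ∫ x, φ x ∂(μ : Measure X) + (β - 1) * ∫ x, φ x ∂(μ : Measure X) := by
          rw [h1]; exact add_le_add (key ν hν) h2
      _ = β * ∫ x, φ x ∂(μ : Measure X) := by ring
  refine ⟨hμinv, ?_⟩
  rw [hzero, zero_add]
  have hval : ∫ x, (β • φ) x ∂(μ : Measure X) = β * ∫ x, φ x ∂(μ : Measure X) := hsmul μ
  rw [hval]
  apply le_antisymm
  · apply le_csSup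
    · refine ⟨β * ∫ x, φ x ∂(μ : Measure X), ?_⟩
      rintro y ⟨σ, hσ, rfl⟩
      exact bound σ hσ
    · exact ⟨μ, hμinv, by dsimp only; rw [hzero, zero_add, hval]⟩
  · apply csSup_le (hne.image _)
    rintro y ⟨σ, hσ, rfl⟩
    exact bound σ hσ
end

section
/- Let φ ∈ C(X), let (β_n) be a sequence of positive reals with β_n → ∞, and for each n let μ_n ∈ M_T(X) be an equilibrium state for β_n φ. If (μ_n) converges to μ∞ ∈ M_T(X) in the weak-* topology, then ∫ φ dμ∞ = Max(φ); that is, every zero-temperature limit of φ is φ-maximizing. -/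
open MeasureTheory Filter Set
open scoped NNReal ENNReal

variable {X : Type*} [MetricSpace X] [CompactSpace X] [Nonempty X]
  [MeasurableSpace X] [BorelSpace X]

theorem stmt18
    (T : X → X) (hT : Continuous T) (hne : (InvMeas T).Nonempty)
    (h : ProbabilityMeasure X → ℝ)
    (hbd : ∃ C : ℝ, ∀ μ ∈ InvMeas T, |h μ| ≤ C)
    (haff : ∀ μ ν : ProbabilityMeasure X, μ ∈ InvMeas T → ν ∈ InvMeas T →
      ∀ t : ℝ, 0 ≤ t → t ≤ 1 → ∀ σ : ProbabilityMeasure X,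
        (σ : Measure X) =
          ENNReal.ofReal t • (μ : Measure X) + ENNReal.ofReal (1 - t) • (ν : Measure X) →
        h σ = t * h μ + (1 - t) * h ν)
    (φ : C(X, ℝ)) (βseq : ℕ → ℝ) (hβpos : ∀ n, 0 < βseq n)
    (hβtop : Tendsto βseq atTop atTop)
    (μseq : ℕ → ProbabilityMeasure X)
    (hμeq : ∀ n, IsEquilib T h (βseq n • φ) (μseq n))
    (μinf : ProbabilityMeasure X) (hμinf : μinf ∈ InvMeas T)
    (hconv : Tendsto μseq atTop (nhds μinf)) :
    ∫ x, φ x ∂(μinf : Measure X) = MaxInt T φ := by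
  obtain ⟨C, hC⟩ := hbd
  have hint : ∀ μ : ProbabilityMeasure X, Integrable (fun x => φ x) (μ : Measure X) :=
    fun μ => (φ.continuous.integrable_of_hasCompactSupport
      (HasCompactSupport.of_compactSpace _))
  -- bound on integrals against probability measures
  have hintbd : ∀ μ : ProbabilityMeasure X, |∫ x, φ x ∂(μ : Measure X)| ≤ ‖φ‖ := by
    intro μ
    have := norm_integral_le_of_norm_le_const (μ := (μ : Measure X))
      (f := fun x => φ x) (C := ‖φ‖) (Filter.Eventually.of_forall fun x => φ.norm_coe_le_norm x)
    simpa using this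
  -- key inequality
  have key : ∀ n, ∀ ν ∈ InvMeas T,
      h ν + βseq n * ∫ x, φ x ∂(ν : Measure X)
        ≤ h (μseq n) + βseq n * ∫ x, φ x ∂(μseq n : Measure X) := by
    intro n ν hν
    have hsmul : ∀ σ : ProbabilityMeasure X,
        ∫ x, (βseq n • φ) x ∂(σ : Measure X) = βseq n * ∫ x, φ x ∂(σ : Measure X) := by
      intro σ
      simp only [ContinuousMap.coe_smul, Pi.smul_apply, smul_eq_mul]
      exact integral_const_mul _ _
    have hbdd : BddAbove ((fun μ : ProbabilityMeasure X =>
        h μ + ∫ x, (βseq n • φ) x ∂(μ : Measure X)) '' InvMeas T) := by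
      refine ⟨C + |βseq n| * ‖φ‖, ?_⟩
      rintro - ⟨σ, hσ, rfl⟩
      have h1 : h σ ≤ C := (abs_le.mp (hC σ hσ)).2
      have h2 : |βseq n * ∫ x, φ x ∂(σ : Measure X)| ≤ |βseq n| * ‖φ‖ := by
        rw [abs_mul]
        exact mul_le_mul_of_nonneg_left (hintbd σ) (abs_nonneg _)
      dsimp only
      rw [hsmul σ]
      linarith [(abs_le.mp h2).2]
    have hle : h ν + ∫ x, (βseq n • φ) x ∂(ν : Measure X) ≤ press T h (βseq n • φ) :=
      le_csSup hbdd ⟨ν, hν, rfl⟩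
    rw [← (hμeq n).2, hsmul ν, hsmul (μseq n)] at hle
    exact hle
  -- the integrals converge
  have htend : Tendsto (fun n => ∫ x, φ x ∂(μseq n : Measure X)) atTop
      (nhds (∫ x, φ x ∂(μinf : Measure X))) := by
    have := ProbabilityMeasure.tendsto_iff_forall_integral_tendsto.mp hconv
      (BoundedContinuousFunction.mkOfCompact φ)
    simpa using this
  -- for each invariant ν, the limit integral dominates
  have hdom : ∀ ν ∈ InvMeas T,
      ∫ x, φ x ∂(ν : Measure X) ≤ ∫ x, φ x ∂(μinf : Measure X) := by
    intro ν hν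
    have herr : Tendsto (fun n => ∫ x, φ x ∂(ν : Measure X) - 2 * C / βseq n) atTop
        (nhds (∫ x, φ x ∂(ν : Measure X))) := by
      have h0 : Tendsto (fun n => 2 * C / βseq n) atTop (nhds 0) :=
        Tendsto.div_atTop tendsto_const_nhds hβtop
      simpa using (tendsto_const_nhds.sub h0)
    refine le_of_tendsto_of_tendsto' herr htend ?_
    intro n
    have hk := key n ν hν
    have hC1 : |h (μseq n)| ≤ C := hC (μseq n) ((hμeq n).1)
    have hC2 : |h ν| ≤ C := hC ν hν
    have hβ := hβpos n
    have : βseq n * (∫ x, φ x ∂(ν : Measure X) - ∫ x, φ x ∂(μseq n : Measure X)) ≤ 2 * C := by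
      nlinarith [(abs_le.mp hC1).1, (abs_le.mp hC1).2, (abs_le.mp hC2).1, (abs_le.mp hC2).2]
    have hdiv : ∫ x, φ x ∂(ν : Measure X) - ∫ x, φ x ∂(μseq n : Measure X) ≤ 2 * C / βseq n := by
      rw [le_div_iff₀ hβ]; linarith
    linarith
  -- conclude
  have hle1 : MaxInt T φ ≤ ∫ x, φ x ∂(μinf : Measure X) := by
    apply csSup_le (hne.image _)
    rintro - ⟨ν, hν, rfl⟩
    exact hdom ν hν
  have hle2 : ∫ x, φ x ∂(μinf : Measure X) ≤ MaxInt T φ :=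
    le_csSup ⟨‖φ‖, by rintro - ⟨σ, hσ, rfl⟩; exact (abs_le.mp (hintbd σ)).2⟩ ⟨μinf, hμinf, rfl⟩
  linarith
end

section
/- Assume h is upper semi-continuous with respect to the weak-* topology on M_T(X). Let φ ∈ C(X), let (β_n) be a sequence of positive reals with β_n → ∞, and for each n let μ_n ∈ M_T(X) be an equilibrium state for β_n φ. If (μ_n) converges to μ∞ ∈ M_T(X) in the weak-* topology, then h(μ∞) = h_∞(φ); that is, every zero-temperature limit of φ attains the maximal value of h among φ-maximizing measures. -/
open MeasureTheory Filter Set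
open scoped NNReal ENNReal

variable {X : Type*} [MetricSpace X] [CompactSpace X] [Nonempty X]
  [MeasurableSpace X] [BorelSpace X]

theorem stmt19
    (T : X → X) (hT : Continuous T) (hne : (InvMeas T).Nonempty)
    (h : ProbabilityMeasure X → ℝ)
    (hbd : ∃ C : ℝ, ∀ μ ∈ InvMeas T, |h μ| ≤ C)
    (haff : ∀ μ ν : ProbabilityMeasure X, μ ∈ InvMeas T → ν ∈ InvMeas T →
      ∀ t : ℝ, 0 ≤ t → t ≤ 1 → ∀ σ : ProbabilityMeasure X,
        (σ : Measure X) =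
          ENNReal.ofReal t • (μ : Measure X) + ENNReal.ofReal (1 - t) • (ν : Measure X) →
        h σ = t * h μ + (1 - t) * h ν)
    (husc : UpperSemicontinuousOn h (InvMeas T))
    (φ : C(X, ℝ)) (βseq : ℕ → ℝ) (hβpos : ∀ n, 0 < βseq n)
    (hβtop : Tendsto βseq atTop atTop)
    (μseq : ℕ → ProbabilityMeasure X)
    (hμeq : ∀ n, IsEquilib T h (βseq n • φ) (μseq n))
    (μinf : ProbabilityMeasure X) (hμinf : μinf ∈ InvMeas T)
    (hconv : Tendsto μseq atTop (nhds μinf)) :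
    h μinf = hInfty T h φ := by
  classical
  obtain ⟨C, hC⟩ := hbd
  -- integral notation
  set I : ProbabilityMeasure X → ℝ := fun μ => ∫ x, φ x ∂(μ : Measure X) with hI
  have hCnonneg : 0 ≤ C := le_trans (abs_nonneg _) (hC _ hne.choose_spec)
  have hIbound : ∀ μ : ProbabilityMeasure X,
      |I μ| ≤ ‖BoundedContinuousFunction.mkOfCompact φ‖ := by
    intro μ
    have := (BoundedContinuousFunction.mkOfCompact φ).norm_integral_le_norm (μ : Measure X)
    simpa [Real.norm_eq_abs] using this
  have hsmul : ∀ (β : ℝ) (μ : ProbabilityMeasure X),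
      ∫ x, (β • φ) x ∂(μ : Measure X) = β * I μ := by
    intro β μ
    simp [hI, MeasureTheory.integral_const_mul]
  have hμmem : ∀ n, μseq n ∈ InvMeas T := fun n => (hμeq n).1
  -- key inequality: for each n and ν ∈ InvMeas, h μₙ + βₙ I(μₙ) ≥ h ν + βₙ I(ν)
  have hkey : ∀ n, ∀ ν ∈ InvMeas T,
      h ν + βseq n * I ν ≤ h (μseq n) + βseq n * I (μseq n) := by
    intro n ν hν
    have hbdd : BddAbove ((fun μ : ProbabilityMeasure X =>
        h μ + ∫ x, (βseq n • φ) x ∂(μ : Measure X)) '' InvMeas T) := by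
      refine ⟨C + |βseq n| * ‖BoundedContinuousFunction.mkOfCompact φ‖, ?_⟩
      rintro y ⟨σ, hσ, rfl⟩
      have h1 : h σ ≤ C := le_trans (le_abs_self _) (hC _ hσ)
      have h2 : ∫ x, (βseq n • φ) x ∂(σ : Measure X) ≤ |βseq n| * ‖BoundedContinuousFunction.mkOfCompact φ‖ := by
        rw [hsmul]
        calc βseq n * I σ ≤ |βseq n * I σ| := le_abs_self _
          _ = |βseq n| * |I σ| := abs_mul _ _
          _ ≤ |βseq n| * ‖BoundedContinuousFunction.mkOfCompact φ‖ :=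
            mul_le_mul_of_nonneg_left (hIbound σ) (abs_nonneg _)
      exact add_le_add h1 h2
    have hle : h ν + ∫ x, (βseq n • φ) x ∂(ν : Measure X) ≤ press T h (βseq n • φ) :=
      le_csSup hbdd (Set.mem_image_of_mem _ hν)
    rw [← (hμeq n).2] at hle
    rw [hsmul, hsmul] at hle
    exact hle
  -- convergence of integrals
  have hIconv : Tendsto (fun n => I (μseq n)) atTop (nhds (I μinf)) := by
    have := (MeasureTheory.ProbabilityMeasure.tendsto_iff_forall_integral_tendsto.mp hconv)
      (BoundedContinuousFunction.mkOfCompact φ)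
    simpa [hI] using this
  -- step 1: I μinf = MaxInt T φ
  have hmax : I μinf = MaxInt T φ := by
    have hbddM : BddAbove ((fun μ : ProbabilityMeasure X =>
        ∫ x, φ x ∂(μ : Measure X)) '' InvMeas T) := by
      refine ⟨‖BoundedContinuousFunction.mkOfCompact φ‖, ?_⟩
      rintro y ⟨σ, hσ, rfl⟩
      exact le_trans (le_abs_self _) (hIbound σ)
    refine le_antisymm (le_csSup hbddM (Set.mem_image_of_mem _ hμinf)) ?_
    refine csSup_le (hne.image _) ?_
    rintro y ⟨ν, hν, rfl⟩
    -- show I ν ≤ I μinf using limits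
    have hstep : ∀ n, I ν - 2 * C / βseq n ≤ I (μseq n) := by
      intro n
      have hk := hkey n ν hν
      have h1 : -(2 * C) ≤ h ν - h (μseq n) := by
        have ha : -C ≤ h ν := neg_le_of_abs_le (hC _ hν)
        have hb : h (μseq n) ≤ C := le_trans (le_abs_self _) (hC _ (hμmem n))
        linarith
      have h2 : -(2 * C) ≤ βseq n * (I (μseq n) - I ν) := by nlinarith [hk]
      have h3 : -(2 * C) / βseq n ≤ I (μseq n) - I ν := by
        rw [div_le_iff₀ (hβpos n)]
        calc -(2*C) ≤ βseq n * (I (μseq n) - I ν) := h2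
          _ = (I (μseq n) - I ν) * βseq n := mul_comm _ _
      have : -(2 * C) / βseq n = -(2 * C / βseq n) := by ring
      linarith [h3]
    have htend : Tendsto (fun n => I ν - 2 * C / βseq n) atTop (nhds (I ν - 0)) :=
      tendsto_const_nhds.sub (Tendsto.div_atTop tendsto_const_nhds hβtop)
    have := le_of_tendsto_of_tendsto' htend hIconv hstep
    simpa using this
  -- step 2: for any maximizing ν, h ν ≤ h μinf
  have hstep2 : ∀ ν, ν ∈ InvMeas T → I ν = MaxInt T φ → h ν ≤ h μinf := by
    intro ν hν hνmax
    by_contra hlt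
    push_neg at hlt
    -- h ν ≤ h (μseq n) for all n
    have hhn : ∀ n, h ν ≤ h (μseq n) := by
      intro n
      have hk := hkey n ν hν
      have hIle : I (μseq n) ≤ MaxInt T φ := by
        rw [← hmax]
        -- I (μseq n) ≤ I μinf? no: use csSup bound directly
        rw [hmax]
        have hbddM : BddAbove ((fun μ : ProbabilityMeasure X =>
            ∫ x, φ x ∂(μ : Measure X)) '' InvMeas T) := by
          refine ⟨‖BoundedContinuousFunction.mkOfCompact φ‖, ?_⟩
          rintro y ⟨σ, hσ, rfl⟩
          exact le_trans (le_abs_self _) (hIbound σ)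
        exact le_csSup hbddM (Set.mem_image_of_mem _ (hμmem n))
      have hIle' : I (μseq n) ≤ I ν := by rw [hνmax]; exact hIle
      nlinarith [hβpos n, hk, hIle']
    -- USC gives eventually h (μseq n) < h ν, contradiction
    have hconv' : Tendsto μseq atTop (nhdsWithin μinf (InvMeas T)) :=
      tendsto_nhdsWithin_of_tendsto_nhds_of_eventually_within _ hconv
        (Eventually.of_forall hμmem)
    have hev : ∀ᶠ n in atTop, h (μseq n) < h ν :=
      hconv'.eventually (husc μinf hμinf (h ν) hlt)
    obtain ⟨n, hn⟩ := hev.exists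
    exact absurd hn (not_lt.mpr (hhn n))
  -- conclude
  have hμinfmax : μinf ∈ {μ ∈ InvMeas T | ∫ x, φ x ∂(μ : Measure X) = MaxInt T φ} :=
    ⟨hμinf, hmax⟩
  have hub : ∀ y ∈ h '' {μ ∈ InvMeas T | ∫ x, φ x ∂(μ : Measure X) = MaxInt T φ},
      y ≤ h μinf := by
    rintro y ⟨ν, ⟨hν, hνmax⟩, rfl⟩
    exact hstep2 ν hν hνmax
  exact le_antisymm (le_csSup ⟨h μinf, hub⟩ (Set.mem_image_of_mem _ hμinfmax))
    (csSup_le ⟨h μinf, Set.mem_image_of_mem _ hμinfmax⟩ hub)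
end
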